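/- arXiv:2411.18426 — 9 statements merged into one kernel-verified Lean document; each statement's English description precedes it below -/
import Mathlib

section
/- Let m ≥ 2 and n, k be positive integers with n ≥ 2k. If F_1, F_2, ..., F_m ⊆ binom([n],k) are non-empty cross-intersecting families, then Σ_{j=1}^m |F_j| ≤ max{ m·C(n−1, k−1) , C(n,k) − C(n−k, k) + m − 1 }. -/
attribute [-instance] instDecidableEqFin
open Finset Nat

lemma my_id (M j : ℕ) : (M+1) * Nat.choose M j = Nat.choose (M+1) j * (M+1-j) := by
  rw [Nat.add_one_mul_choose_eq, Nat.choose_succ_right_eq]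

lemma slope_step {a b M : ℕ} (hab : a ≤ b) (hbM : b ≤ M) :
    Nat.choose (M+1) a * Nat.choose M b ≤ Nat.choose M a * Nat.choose (M+1) b := by
  have h1 : 0 < M+1-b := by omega
  apply Nat.le_of_mul_le_mul_right _ h1
  calc Nat.choose (M+1) a * Nat.choose M b * (M+1-b)
      ≤ Nat.choose (M+1) a * Nat.choose M b * (M+1-a) := by
        apply Nat.mul_le_mul_left; omega
    _ = (Nat.choose (M+1) a * (M+1-a)) * Nat.choose M b := by ring
    _ = ((M+1) * Nat.choose M a) * Nat.choose M b := by rw [← my_id]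
    _ = Nat.choose M a * ((M+1) * Nat.choose M b) := by ring
    _ = Nat.choose M a * (Nat.choose (M+1) b * (M+1-b)) := by rw [my_id]
    _ = Nat.choose M a * Nat.choose (M+1) b * (M+1-b) := by ring

lemma slope_prop_up {a b c : ℕ} (hab : a ≤ b) {M : ℕ} (hbM : b ≤ M)
    (hM : Nat.choose M a ≤ c * Nat.choose M b) :
    ∀ N, M ≤ N → Nat.choose N a ≤ c * Nat.choose N b := by
  intro N hN
  induction N, hN using Nat.le_induction with
  | base => exact hM
  | succ N hMN ih =>
    have hbN : b ≤ N := le_trans hbM hMN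
    have hpos : 0 < Nat.choose N b := Nat.choose_pos hbN
    apply Nat.le_of_mul_le_mul_right _ hpos
    calc Nat.choose (N+1) a * Nat.choose N b
        ≤ Nat.choose N a * Nat.choose (N+1) b := slope_step hab hbN
      _ ≤ (c * Nat.choose N b) * Nat.choose (N+1) b := Nat.mul_le_mul_right _ ih
      _ = c * Nat.choose (N+1) b * Nat.choose N b := by ring

lemma slope_prop_down {a b c : ℕ} (hab : a ≤ b) {N M : ℕ} (hbN : b ≤ N) (hNM : N ≤ M)
    (hM : c * Nat.choose M b ≤ Nat.choose M a) :
    c * Nat.choose N b ≤ Nat.choose N a := by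
  induction M, hNM using Nat.le_induction with
  | base => exact hM
  | succ M hNM ih =>
    apply ih
    have hbM : b ≤ M := le_trans hbN hNM
    have hpos : 0 < Nat.choose (M+1) b := Nat.choose_pos (by omega)
    apply Nat.le_of_mul_le_mul_right _ hpos
    calc c * Nat.choose M b * Nat.choose (M+1) b
        = (c * Nat.choose (M+1) b) * Nat.choose M b := by ring
      _ ≤ Nat.choose (M+1) a * Nat.choose M b := Nat.mul_le_mul_right _ hM
      _ ≤ Nat.choose M a * Nat.choose (M+1) b := slope_step hab hbM

lemma pascal' {N k : ℕ} (hk : 1 ≤ k) :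
    Nat.choose (N+1) k = Nat.choose N (k-1) + Nat.choose N k := by
  obtain ⟨k', rfl⟩ : ∃ k', k = k'+1 := ⟨k-1, by omega⟩
  simp [Nat.choose_succ_succ]

lemma chain_up {c k r M : ℕ} (hk : 1 ≤ k) (hkr : k ≤ r) (hrM : r ≤ M)
    (hsl : Nat.choose M (k-1) ≤ c * Nat.choose M (r-1)) :
    ∀ N, M ≤ N → Nat.choose N k + c * Nat.choose M r ≤ Nat.choose M k + c * Nat.choose N r := by
  have hab : k-1 ≤ r-1 := by omega
  have hbM : r-1 ≤ M := by omega
  intro N hN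
  induction N, hN using Nat.le_induction with
  | base => omega
  | succ N hMN ih =>
    have hslN : Nat.choose N (k-1) ≤ c * Nat.choose N (r-1) :=
      slope_prop_up hab hbM hsl N hMN
    have p1 : Nat.choose (N+1) k = Nat.choose N (k-1) + Nat.choose N k := pascal' hk
    have p2 : c * Nat.choose (N+1) r = c * Nat.choose N (r-1) + c * Nat.choose N r := by
      rw [pascal' (by omega)]; ring
    linarith

lemma chain_down {c k r M : ℕ} (hk : 1 ≤ k) (hkr : k ≤ r) (hrM : r ≤ M)
    (hsl : c * Nat.choose M (r-1) ≤ Nat.choose M (k-1)) :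
    Nat.choose r k + c * Nat.choose M r ≤ Nat.choose M k + c := by
  have hab : k-1 ≤ r-1 := by omega
  induction M, hrM using Nat.le_induction with
  | base => simp [Nat.choose_self]
  | succ M hrM ih =>
    have hslM : c * Nat.choose M (r-1) ≤ Nat.choose M (k-1) :=
      slope_prop_down hab (by omega) (by omega) hsl
    have := ih hslM
    have p1 : Nat.choose (M+1) k = Nat.choose M (k-1) + Nat.choose M k := pascal' hk
    have p2 : c * Nat.choose (M+1) r = c * Nat.choose M (r-1) + c * Nat.choose M r := by
      rw [pascal' (by omega)]; ring
    linarith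

lemma seg_bound {c w h q K1 : ℕ} (hw : 0 < w) (hh : h ≤ w)
    (hlym : h * K1 ≤ q * w) (hbr : K1 ≤ c * w) : c * h + K1 ≤ q + c * w := by
  apply Nat.le_of_mul_le_mul_right _ hw
  have h1 : (w - h) * K1 ≤ (w - h) * (c * w) := Nat.mul_le_mul_left _ hbr
  have h2 : w - h + h = w := by omega
  nlinarith [h1, h2]
open Finset Nat
open scoped FinsetFamily

variable {α : Type*} [DecidableEq α]

lemma shadow_subset_ground {s : Finset α} {b : ℕ} {𝒜 : Finset (Finset α)}
    (h : ∀ A ∈ 𝒜, A ⊆ s ∧ #A = b) (hb : 1 ≤ b) :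
    ∀ t ∈ ∂ 𝒜, t ⊆ s ∧ #t = b - 1 := by
  intro t ht
  rw [mem_shadow_iff_exists_sdiff] at ht
  obtain ⟨A, hA, hts, hcard⟩ := ht
  obtain ⟨hAs, hAb⟩ := h A hA
  constructor
  · exact hts.trans hAs
  · have := card_sdiff_of_subset hts
    omega

lemma lym_ground {s : Finset α} {b : ℕ} {𝒜 : Finset (Finset α)}
    (hb : 1 ≤ b) (h : ∀ A ∈ 𝒜, A ⊆ s ∧ #A = b) :
    #(𝒜) * b ≤ #(∂ 𝒜) * (#s - b + 1) := by
  classical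
  refine card_mul_le_card_mul' (· ⊆ ·) (fun A hA => ?_) (fun t ht => ?_)
  · -- each A ∈ 𝒜 has ≥ b subsets in ∂𝒜
    rw [← (h A hA).2, ← Finset.card_image_of_injOn A.erase_injOn]
    refine card_le_card ?_
    simp_rw [image_subset_iff, mem_bipartiteBelow]
    exact fun a ha => ⟨erase_mem_shadow hA ha, erase_subset _ _⟩
  · -- each t ∈ ∂𝒜 has ≤ #s - b + 1 supersets in 𝒜
    obtain ⟨hts, htb⟩ := shadow_subset_ground h hb t ht
    have hstcard : #(s \ t) = #s - (b-1) := by rw [card_sdiff_of_subset hts, htb]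
    have hle : #((s \ t).image (fun a => ({a} : Finset α))) ≤ #s - b + 1 := by
      refine le_trans (card_image_le) ?_
      have : #t ≤ #s := card_le_card hts
      omega
    refine le_trans ?_ hle
    apply card_le_card_of_injOn (fun A => A \ t)
    · intro A hA
      rw [mem_coe, mem_bipartiteAbove] at hA
      obtain ⟨hA𝒜, htA⟩ := hA
      obtain ⟨hAs, hAb⟩ := h A hA𝒜
      have hone : #(A \ t) = 1 := by
        rw [card_sdiff_of_subset htA]; omega
      obtain ⟨a, ha⟩ := card_eq_one.1 hone
      simp only [mem_coe]; rw [ha]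
      refine mem_image_of_mem _ ?_
      have : a ∈ A \ t := by rw [ha]; exact mem_singleton_self a
      rw [mem_sdiff] at this ⊢
      exact ⟨hAs this.1, this.2⟩
    · intro A hA B hB hAB
      rw [mem_coe, mem_bipartiteAbove] at hA hB
      have : A \ t ∪ t = B \ t ∪ t := by simp only at hAB; rw [hAB]
      rwa [sdiff_union_of_subset hA.2, sdiff_union_of_subset hB.2] at this

lemma lym_ground_iter {s : Finset α} {b : ℕ} (j : ℕ) (hj : j ≤ b) (hbs : b ≤ #s)
    {𝒜 : Finset (Finset α)} (h : ∀ A ∈ 𝒜, A ⊆ s ∧ #A = b) :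
    #(𝒜) * Nat.choose (#s) (b - j) ≤ #(∂^[j] 𝒜) * Nat.choose (#s) b := by
  induction j with
  | zero => simp
  | succ j ih =>
    have hj' : j ≤ b := by omega
    have ihh := ih hj'
    -- members of ∂^[j]𝒜 are subsets of s of size b - j
    have hmem : ∀ A ∈ ∂^[j] 𝒜, A ⊆ s ∧ #A = b - j := by
      intro A hA
      rw [mem_shadow_iterate_iff_exists_sdiff] at hA
      obtain ⟨B, hB, hAB, hcard⟩ := hA
      obtain ⟨hBs, hBb⟩ := h B hB
      exact ⟨hAB.trans hBs, by have := card_sdiff_of_subset hAB; have := card_le_card hAB; omega⟩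
    have hloc : #(∂^[j] 𝒜) * (b - j) ≤ #(∂^[j+1] 𝒜) * (#s - (b - j) + 1) :=  by
      have := lym_ground (s := s) (b := b - j) (by omega) hmem
      simpa [Function.iterate_succ_apply'] using this
    -- combine
    have hid : Nat.choose (#s) (b - j) * (b - j) = Nat.choose (#s) (b - (j+1)) * (#s - (b - j) + 1) := by
      have h1 : b - j = (b - (j+1)) + 1 := by omega
      rw [h1, Nat.choose_succ_right_eq]
      congr 1
      omega
    have hpos : 0 < #s - (b - j) + 1 := by omega
    apply Nat.le_of_mul_le_mul_right _ hpos
    calc #𝒜 * Nat.choose (#s) (b - (j+1)) * (#s - (b - j) + 1)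
        = #𝒜 * (Nat.choose (#s) (b - (j+1)) * (#s - (b - j) + 1)) := by ring
      _ = #𝒜 * (Nat.choose (#s) (b - j) * (b - j)) := by rw [hid]
      _ = (#𝒜 * Nat.choose (#s) (b - j)) * (b - j) := by ring
      _ ≤ (#(∂^[j] 𝒜) * Nat.choose (#s) b) * (b - j) := Nat.mul_le_mul_right _ ihh
      _ = (#(∂^[j] 𝒜) * (b - j)) * Nat.choose (#s) b := by ring
      _ ≤ (#(∂^[j+1] 𝒜) * (#s - (b - j) + 1)) * Nat.choose (#s) b := Nat.mul_le_mul_right _ hloc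
      _ = #(∂^[j+1] 𝒜) * Nat.choose (#s) b * (#s - (b - j) + 1) := by ring
open Finset Nat Finset.Colex
open scoped FinsetFamily

section ColexHelpers
variable {α : Type*} [LinearOrder α]

lemma subset_prefix_of_colex_lt {S s t : Finset α}
    (hS : ∀ x y : α, x ≤ y → y ∈ S → x ∈ S)
    (hs : s ⊆ S) (h : toColex t < toColex s) : t ⊆ S := by
  rw [toColex_lt_toColex_iff_exists_forall_lt] at h
  obtain ⟨a, haS, hat, hall⟩ := h
  intro b hb
  by_cases hbs : b ∈ s
  · exact hs hbs
  · exact hS b a (le_of_lt (hall b hb hbs)) (hs haS)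

lemma toColex_insert_lt_insert {a : α} {s t : Finset α} (ha : a ∉ s) (hb : a ∉ t) :
    toColex (insert a s) < toColex (insert a t) ↔ toColex s < toColex t := by
  rw [← toColex_sdiff_lt_toColex_sdiff', ← toColex_sdiff_lt_toColex_sdiff' (s := s)]
  have h1 : insert a s \ insert a t = s \ t := by
    ext x
    simp only [mem_sdiff, mem_insert, not_or]
    constructor
    · rintro ⟨hx1 | hx1, hx2, hx3⟩
      · exact absurd hx1 hx2
      · exact ⟨hx1, hx3⟩
    · rintro ⟨hx1, hx2⟩
      exact ⟨Or.inr hx1, fun hxa => (hxa ▸ ha) hx1, hx2⟩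
  have h2 : insert a t \ insert a s = t \ s := by
    ext x
    simp only [mem_sdiff, mem_insert, not_or]
    constructor
    · rintro ⟨hx1 | hx1, hx2, hx3⟩
      · exact absurd hx1 hx2
      · exact ⟨hx1, hx3⟩
    · rintro ⟨hx1, hx2⟩
      exact ⟨Or.inr hx1, fun hxa => (hxa ▸ hb) hx1, hx2⟩
  rw [h1, h2]

lemma isInitSeg_powersetCard_prefix {S : Finset α} {c : ℕ}
    (hS : ∀ x y : α, x ≤ y → y ∈ S → x ∈ S) :
    IsInitSeg (S.powersetCard c) c := by
  constructor
  · intro A hA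
    exact (mem_powersetCard.1 hA).2
  · rintro s t hs ⟨hts, htc⟩
    rw [mem_powersetCard] at hs ⊢
    exact ⟨subset_prefix_of_colex_lt hS hs.1 hts, htc⟩

end ColexHelpers

section InitSegExists
variable {n : ℕ}

lemma exists_initSeg_card (c h : ℕ)
    (hh : h ≤ #(powersetCard c (univ : Finset (Fin n)))) :
    ∃ 𝒟 : Finset (Finset (Fin n)), IsInitSeg 𝒟 c ∧ #𝒟 = h := by
  induction h with
  | zero => exact ⟨∅, isInitSeg_empty, rfl⟩
  | succ h ih =>
    obtain ⟨𝒟, h𝒟, hcard⟩ := ih (by omega)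
    have hsub : 𝒟 ⊆ powersetCard c (univ : Finset (Fin n)) := by
      intro A hA
      rw [mem_powersetCard]
      exact ⟨subset_univ _, h𝒟.1 hA⟩
    have hne : (powersetCard c (univ : Finset (Fin n)) \ 𝒟).Nonempty := by
      rw [← card_pos, card_sdiff_of_subset hsub]
      omega
    obtain ⟨B, hB, hmin⟩ := Finset.exists_min_image _ (fun A => toColex A) hne
    rw [mem_sdiff] at hB
    refine ⟨insert B 𝒟, ⟨?_, ?_⟩, ?_⟩
    · intro A hA
      rw [coe_insert, Set.mem_insert_iff] at hA
      rcases hA with rfl | hA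
      · exact (mem_powersetCard.1 hB.1).2
      · exact h𝒟.1 hA
    · rintro s t hs ⟨hts, htc⟩
      rw [mem_insert] at hs
      rcases hs with rfl | hs
      · by_cases ht𝒟 : t ∈ 𝒟
        · exact mem_insert_of_mem ht𝒟
        · exfalso
          have htP : t ∈ powersetCard c (univ : Finset (Fin n)) :=
            mem_powersetCard.2 ⟨subset_univ _, htc⟩
          have := hmin t (mem_sdiff.2 ⟨htP, ht𝒟⟩)
          exact absurd hts (not_lt.2 this)
      · exact mem_insert_of_mem (h𝒟.2 hs ⟨hts, htc⟩)
    · rw [card_insert_of_notMem hB.2, hcard]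

end InitSegExists

section Construction
variable {n : ℕ}

lemma construction {r k d M : ℕ} (hk : 1 ≤ k) (hkr : k ≤ r) (hd : d = r - k)
    (hrM : r ≤ M) (hMn : M < n) (h : ℕ) (hh : h ≤ Nat.choose M (r-1)) :
    ∃ (𝒞 : Finset (Finset (Fin n))) (q : ℕ),
      IsInitSeg 𝒞 r ∧ #𝒞 = Nat.choose M r + h ∧
      Nat.choose M k + q ≤ #(∂^[d] 𝒞) ∧
      h * Nat.choose M (k-1) ≤ q * Nat.choose M (r-1) := by
  classical
  set S : Finset (Fin n) := attachFin (range M) (fun m hm => lt_trans (mem_range.1 hm) hMn)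
    with hS_def
  have hmemS : ∀ x : Fin n, x ∈ S ↔ (x : ℕ) < M := by
    intro x; rw [hS_def, mem_attachFin, mem_range]
  have hScard : #S = M := by rw [hS_def, card_attachFin, card_range]
  have hSpre : ∀ x y : Fin n, x ≤ y → y ∈ S → x ∈ S := by
    intro x y hxy hy
    rw [hmemS] at hy ⊢
    exact lt_of_le_of_lt (Fin.le_def.1 hxy) hy
  set Mf : Fin n := ⟨M, hMn⟩ with hMf_def
  have hMfS : Mf ∉ S := by rw [hmemS]; simp [hMf_def]
  -- the initial segment 𝒟 of (r-1)-sets of size h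
  have hhn : h ≤ #(powersetCard (r-1) (univ : Finset (Fin n))) := by
    rw [card_powersetCard, Finset.card_univ, Fintype.card_fin]
    exact le_trans hh (Nat.choose_le_choose _ (le_of_lt hMn))
  obtain ⟨𝒟, h𝒟, h𝒟card⟩ := exists_initSeg_card (r-1) h hhn
  have h𝒟P : 𝒟 ⊆ S.powersetCard (r-1) := by
    rcases Finset.Colex.IsInitSeg.total h𝒟 (isInitSeg_powersetCard_prefix hSpre) with hsub | hsub
    · exact hsub
    · have hc : #(S.powersetCard (r-1)) = Nat.choose M (r-1) := by
        rw [card_powersetCard, hScard]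
      have := eq_of_subset_of_card_le hsub (by omega)
      rw [this]
  have h𝒟mem : ∀ B ∈ 𝒟, B ⊆ S ∧ #B = r - 1 := by
    intro B hB
    exact mem_powersetCard.1 (h𝒟P hB)
  have h𝒟Mf : ∀ B ∈ 𝒟, Mf ∉ B := fun B hB hMfB => hMfS ((h𝒟mem B hB).1 hMfB)
  set 𝒞 : Finset (Finset (Fin n)) := S.powersetCard r ∪ 𝒟.image (insert Mf) with h𝒞_def
  have hdisj : Disjoint (S.powersetCard r) (𝒟.image (insert Mf)) := by
    rw [disjoint_left]
    intro C hC hC'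
    obtain ⟨B, hB, rfl⟩ := mem_image.1 hC'
    exact hMfS ((mem_powersetCard.1 hC).1 (mem_insert_self _ _))
  have hinj : Set.InjOn (insert Mf) (𝒟 : Set (Finset (Fin n))) := by
    intro A hA B hB hAB
    have hA' : Mf ∉ A := h𝒟Mf A hA
    have hB' : Mf ∉ B := h𝒟Mf B hB
    rw [← erase_insert hA', ← erase_insert hB', hAB]
  have h𝒞card : #𝒞 = Nat.choose M r + h := by
    rw [h𝒞_def, card_union_of_disjoint hdisj, card_powersetCard, hScard,
      Finset.card_image_of_injOn hinj, h𝒟card]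
  have h𝒞init : IsInitSeg 𝒞 r := by
    constructor
    · intro C hC
      rw [h𝒞_def, coe_union, Set.mem_union] at hC
      rcases hC with hC | hC
      · exact (mem_powersetCard.1 hC).2
      · rw [mem_coe, mem_image] at hC
        obtain ⟨B, hB, rfl⟩ := hC
        rw [card_insert_of_notMem (h𝒟Mf B hB), (h𝒟mem B hB).2]
        omega
    · rintro s t hs ⟨hts, htc⟩
      rw [h𝒞_def, mem_union] at hs
      rcases hs with hs | hs
      · have := subset_prefix_of_colex_lt hSpre (mem_powersetCard.1 hs).1 hts
        rw [h𝒞_def, mem_union]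
        exact Or.inl (mem_powersetCard.2 ⟨this, htc⟩)
      · obtain ⟨B, hB, rfl⟩ := mem_image.1 hs
        have hBS := (h𝒟mem B hB).1
        have hBcard := (h𝒟mem B hB).2
        have hMfB := h𝒟Mf B hB
        by_cases hMft : Mf ∈ t
        · set t' := t.erase Mf with ht'_def
          have ht'card : #t' = r - 1 := by rw [ht'_def, card_erase_of_mem hMft, htc]
          have hMft' : Mf ∉ t' := notMem_erase _ _
          have hins : t = insert Mf t' := (insert_erase hMft).symm
          rw [hins] at hts
          have hlt : toColex t' < toColex B := (toColex_insert_lt_insert hMft' hMfB).1 hts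
          have ht'𝒟 : t' ∈ 𝒟 := h𝒟.2 hB ⟨hlt, ht'card⟩
          rw [h𝒞_def, mem_union]
          exact Or.inr (hins ▸ mem_image_of_mem _ ht'𝒟)
        · -- t avoids Mf hence t ⊆ S
          have htS : t ⊆ S := by
            rw [toColex_lt_toColex_iff_exists_forall_lt] at hts
            obtain ⟨a, has, hat, hall⟩ := hts
            intro b hb
            rw [hmemS]
            have haM : (a : ℕ) ≤ M := by
              rcases mem_insert.1 has with rfl | haB
              · simp [hMf_def]
              · exact le_of_lt ((hmemS a).1 (hBS haB))
            by_cases hbs : b ∈ insert Mf B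
            · rcases mem_insert.1 hbs with rfl | hbB
              · exact absurd hb hMft
              · exact (hmemS b).1 (hBS hbB)
            · have hba : b < a := hall b hb hbs
              have : (b : ℕ) < (a : ℕ) := Fin.lt_def.1 hba
              omega
          rw [h𝒞_def, mem_union]
          exact Or.inl (mem_powersetCard.2 ⟨htS, htc⟩)
  -- shadow lower bound
  set q := #(∂^[d] 𝒟) with hq_def
  have hsh𝒟mem : ∀ A ∈ ∂^[d] 𝒟, A ⊆ S ∧ Mf ∉ A ∧ #A = k - 1 := by
    intro A hA
    rw [mem_shadow_iterate_iff_exists_sdiff] at hA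
    obtain ⟨B, hB, hAB, hcard⟩ := hA
    have hAS : A ⊆ S := hAB.trans (h𝒟mem B hB).1
    refine ⟨hAS, fun hMfA => hMfS (hAS hMfA), ?_⟩
    have h1 := card_sdiff_of_subset hAB
    have h2 := card_le_card hAB
    have := (h𝒟mem B hB).2
    omega
  have hP1 : S.powersetCard k ⊆ ∂^[d] 𝒞 := by
    intro A hA
    rw [mem_powersetCard] at hA
    obtain ⟨hA1, hA2⟩ := hA
    obtain ⟨C, hAC, hCS, hCcard⟩ := exists_subsuperset_card_eq (n := r) hA1 (by omega)
      (by rw [hScard]; exact hrM)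
    rw [mem_shadow_iterate_iff_exists_sdiff]
    refine ⟨C, ?_, hAC, ?_⟩
    · rw [h𝒞_def, mem_union]
      exact Or.inl (mem_powersetCard.2 ⟨hCS, hCcard⟩)
    · rw [card_sdiff_of_subset hAC, hCcard, hA2]; omega
  have hP2 : (∂^[d] 𝒟).image (insert Mf) ⊆ ∂^[d] 𝒞 := by
    intro t ht
    obtain ⟨A, hA, rfl⟩ := mem_image.1 ht
    rw [mem_shadow_iterate_iff_exists_sdiff] at hA ⊢
    obtain ⟨B, hB, hAB, hcard⟩ := hA
    refine ⟨insert Mf B, ?_, insert_subset_insert _ hAB, ?_⟩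
    · rw [h𝒞_def, mem_union]
      exact Or.inr (mem_image_of_mem _ hB)
    · have hMfB := h𝒟Mf B hB
      have hMfA : Mf ∉ A := fun hMfA => hMfB (hAB hMfA)
      have : insert Mf B \ insert Mf A = B \ A := by
        ext x
        simp only [mem_sdiff, mem_insert, not_or]
        constructor
        · rintro ⟨hx1 | hx1, hx2, hx3⟩
          · exact absurd hx1 hx2
          · exact ⟨hx1, hx3⟩
        · rintro ⟨hx1, hx2⟩
          exact ⟨Or.inr hx1, fun hxa => (hxa ▸ hMfB) hx1, hx2⟩
      rw [this, hcard]
  have hinj2 : Set.InjOn (insert Mf) ((∂^[d] 𝒟 : Finset (Finset (Fin n))) : Set (Finset (Fin n))) := by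
    intro A hA B hB hAB
    have hA' : Mf ∉ A := (hsh𝒟mem A hA).2.1
    have hB' : Mf ∉ B := (hsh𝒟mem B hB).2.1
    rw [← erase_insert hA', ← erase_insert hB', hAB]
  have hdisj2 : Disjoint (S.powersetCard k) ((∂^[d] 𝒟).image (insert Mf)) := by
    rw [disjoint_left]
    intro C hC hC'
    obtain ⟨B, hB, rfl⟩ := mem_image.1 hC'
    exact hMfS ((mem_powersetCard.1 hC).1 (mem_insert_self _ _))
  have hlower : Nat.choose M k + q ≤ #(∂^[d] 𝒞) := by
    have hsub : S.powersetCard k ∪ (∂^[d] 𝒟).image (insert Mf) ⊆ ∂^[d] 𝒞 :=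
      union_subset hP1 hP2
    have := card_le_card hsub
    rwa [card_union_of_disjoint hdisj2, card_powersetCard, hScard,
      Finset.card_image_of_injOn hinj2, ← hq_def] at this
  have hlym : h * Nat.choose M (k-1) ≤ q * Nat.choose M (r-1) := by
    have := lym_ground_iter (s := S) (b := r-1) d (by omega) (by rw [hScard]; omega)
      (𝒜 := 𝒟) (fun B hB => h𝒟mem B hB)
    rw [hScard, h𝒟card] at this
    have heq : r - 1 - d = k - 1 := by omega
    rwa [heq] at this
  exact ⟨𝒞, q, h𝒞init, h𝒞card, hlower, hlym⟩

end Construction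
section Key
variable {n : ℕ}

lemma key {n k c : ℕ} (hk : 1 ≤ k) (hn : 2*k ≤ n) (hc : 1 ≤ c)
    {F G : Finset (Finset (Fin n))}
    (hF : ∀ A ∈ F, #A = k) (hG : ∀ B ∈ G, #B = k)
    (hGF : #G ≤ #F) (hGne : G.Nonempty)
    (hx : ∀ A ∈ F, ∀ B ∈ G, (A ∩ B).Nonempty) :
    #(F) + c * #G ≤ max ((c+1) * Nat.choose (n-1) (k-1))
      (Nat.choose n k - Nat.choose (n-k) k + c) := by
  classical
  set r : ℕ := n - k with hr_def
  set d : ℕ := n - 2*k with hd_def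
  set α : ℕ := Nat.choose (n-1) (k-1) with hα_def
  have hkr : k ≤ r := by omega
  have hr1 : 1 ≤ r := by omega
  have hrn1 : r ≤ n - 1 := by omega
  have hn2 : 2 ≤ n := by omega
  have hd : d = r - k := by omega
  have halpha : Nat.choose (n-1) r = α := by
    rw [hα_def]
    have h1 : r = (n-1) - (k-1) := by omega
    rw [h1, Nat.choose_symm (by omega)]
  have hpascaln : Nat.choose n k = Nat.choose (n-1) (k-1) + Nat.choose (n-1) k := by
    have h1 : n = (n-1) + 1 := by omega
    rw [h1]
    exact pascal' hk
  -- sizedness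
  have hGs : (G : Set (Finset (Fin n))).Sized k := fun B hB => hG B hB
  have hHs : ((Gᶜˢ : Finset (Finset (Fin n))) : Set (Finset (Fin n))).Sized r := by
    have := hGs.compls
    simpa [hr_def] using this
  have hHcard : #(Gᶜˢ) = #G := card_compls _
  -- disjointness of F and the iterated shadow of complements
  have hdisj : Disjoint F (∂^[d] Gᶜˢ) := by
    rw [disjoint_right]
    intro A hAsh hAF
    rw [mem_shadow_iterate_iff_exists_sdiff] at hAsh
    obtain ⟨C, hC, hAC, -⟩ := hAsh
    rw [mem_compls] at hC
    have hABdisj : Disjoint A Cᶜ := disjoint_of_subset_left hAC disjoint_compl_right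
    have hne := hx A hAF Cᶜ hC
    exact hne.ne_empty (Finset.disjoint_iff_inter_eq_empty.1 hABdisj)
  -- union is inside the k-th layer
  have hFsub : F ∪ ∂^[d] Gᶜˢ ⊆ powersetCard k (univ : Finset (Fin n)) := by
    intro A hA
    rw [mem_union] at hA
    rw [mem_powersetCard]
    refine ⟨subset_univ _, ?_⟩
    rcases hA with hA | hA
    · exact hF A hA
    · have := hHs.shadow_iterate (k := d) hA
      omega
  have hunion : #F + #(∂^[d] Gᶜˢ) ≤ Nat.choose n k := by
    have h1 := card_le_card hFsub
    rw [card_union_of_disjoint hdisj, card_powersetCard, Finset.card_univ,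
      Fintype.card_fin] at h1
    exact h1
  by_cases hcase : α ≤ #G
  · -- big case : both ≤ α
    have hlov := kruskal_katona_lovasz_form (i := d) (r := r) (k := n-1) (n := n)
      (by omega) hrn1 (by omega) hHs (by rw [hHcard, halpha]; exact hcase)
    have hrd : r - d = k := by omega
    rw [hrd] at hlov
    have hFα : #F ≤ α := by omega
    have hGα : #G ≤ α := le_trans hGF hFα
    have : #F + c * #G ≤ (c+1) * α := by
      have h2 : c * #G ≤ c * α := Nat.mul_le_mul_left c hGα
      have h3 : (c+1) * α = α + c * α := by ring
      omega
    exact le_trans this (le_max_left _ _)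
  · -- main case : #G ≤ α
    push_neg at hcase
    have hg1 : 1 ≤ #G := card_pos.2 hGne
    set g : ℕ := #G with hg_def
    set M : ℕ := Nat.findGreatest (fun M => Nat.choose M r ≤ g) (n-1) with hM_def
    have hMr : r ≤ M := by
      apply Nat.le_findGreatest hrn1
      simp only [Nat.choose_self]
      omega
    have hMle : Nat.choose M r ≤ g := by
      rw [hM_def]
      exact Nat.findGreatest_spec (P := fun M => Nat.choose M r ≤ g) hrn1
        (by simp only [Nat.choose_self]; omega)
    have hMn1 : M ≤ n - 1 := Nat.findGreatest_le _
    have hMn : M < n := by omega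
    set h : ℕ := g - Nat.choose M r with hh_def
    have hgMh : g = Nat.choose M r + h := by omega
    have hhle : h ≤ Nat.choose M (r-1) := by
      by_cases hMtop : M = n - 1
      · have : g ≤ Nat.choose M r := by
          rw [hMtop, halpha]
          omega
        omega
      · have hnot : ¬ (Nat.choose (M+1) r ≤ g) :=
          Nat.findGreatest_is_greatest (P := fun M => Nat.choose M r ≤ g) (n := n-1)
            (k := M+1) (by rw [hM_def]; omega) (by omega)
        have hp : Nat.choose (M+1) r = Nat.choose M (r-1) + Nat.choose M r := pascal' hr1
        omega
    obtain ⟨𝒞, q, h𝒞init, h𝒞card, h𝒞low, h𝒞lym⟩ :=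
      construction (n := n) hk hkr hd hMr hMn h hhle
    have hkk := iterated_kk (𝒜 := Gᶜˢ) (𝒞 := 𝒞) (k := d) hHs
      (by rw [h𝒞card, hHcard]; omega) h𝒞init
    have F1 : #F + (Nat.choose M k + q) ≤ Nat.choose n k := by
      have := le_trans h𝒞low hkk
      omega
    have hw : 0 < Nat.choose M (r-1) := Nat.choose_pos (by omega)
    by_cases hMtop : M = n - 1
    · -- top segment : h = 0 and direct bound
      have hh0 : h = 0 := by
        have : g ≤ Nat.choose M r := by rw [hMtop, halpha]; omega
        omega
      have hMknk : Nat.choose M k = Nat.choose (n-1) k := by rw [hMtop]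
      have hMrα : Nat.choose M r = α := by rw [hMtop, halpha]
      have : #F + c * g ≤ (c+1) * α := by
        have e1 : c * g = c * α := by rw [hgMh, hh0, hMrα]; ring
        have e2 : (c+1) * α = α + c * α := by ring
        omega
      exact le_trans this (le_max_left _ _)
    · have hM1n1 : M + 1 ≤ n - 1 := by omega
      by_cases hbr : Nat.choose M (k-1) ≤ c * Nat.choose M (r-1)
      · -- going up : bound by (c+1) α
        have hseg : c * h + Nat.choose M (k-1) ≤ q + c * Nat.choose M (r-1) :=
          seg_bound hw hhle h𝒞lym hbr
        have hslM1 : Nat.choose (M+1) (k-1) ≤ c * Nat.choose (M+1) (r-1) :=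
          slope_prop_up (by omega) (by omega) hbr (M+1) (by omega)
        have hchain := chain_up (c := c) hk hkr (by omega : r ≤ M + 1) hslM1 (n-1) hM1n1
        -- pascal identities
        have p1 : Nat.choose (M+1) k = Nat.choose M (k-1) + Nat.choose M k := pascal' hk
        have p2 : Nat.choose (M+1) r = Nat.choose M (r-1) + Nat.choose M r := pascal' hr1
        have e3 : c * Nat.choose (M+1) r = c * Nat.choose M (r-1) + c * Nat.choose M r := by
          rw [p2]; ring
        have e4 : c * g = c * Nat.choose M r + c * h := by rw [hgMh]; ring
        have e5 : c * Nat.choose (n-1) r = c * α := by rw [halpha]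
        have target : #F + c * g ≤ (c+1) * α := by
          have e6 : (c+1) * α = α + c * α := by ring
          -- combine : F1, hseg, hchain, pascals
          linarith [F1, hseg, hchain, p1, e3, e4, e5, e6, hpascaln]
        exact le_trans target (le_max_left _ _)
      · -- going down : bound by C(n,k) - C(n-k,k) + c
        push_neg at hbr
        have hqch : c * h ≤ q := by
          have h1 : h * Nat.choose M (k-1) ≤ q * Nat.choose M (r-1) := h𝒞lym
          have h2 : (c * h) * Nat.choose M (r-1) ≤ q * Nat.choose M (r-1) := by
            calc (c * h) * Nat.choose M (r-1) = h * (c * Nat.choose M (r-1)) := by ring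
              _ ≤ h * Nat.choose M (k-1) := Nat.mul_le_mul_left _ (le_of_lt hbr)
              _ ≤ q * Nat.choose M (r-1) := h1
          exact Nat.le_of_mul_le_mul_right h2 hw
        have hchain := chain_down (c := c) hk hkr hMr (le_of_lt hbr)
        have e4 : c * g = c * Nat.choose M r + c * h := by rw [hgMh]; ring
        have hrk_le : Nat.choose r k ≤ Nat.choose n k := Nat.choose_le_choose _ (by omega)
        have target : #F + c * g + Nat.choose r k ≤ Nat.choose n k + c := by
          have : c * Nat.choose M r * 1 = c * Nat.choose M r := by ring
          linarith [F1, hqch, hchain, e4]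
        have : #F + c * g ≤ Nat.choose n k - Nat.choose r k + c := by omega
        exact le_trans this (le_max_right _ _)

end Key
section Main

/-- transfer map -/
noncomputable def phi (n : ℕ) (A : Finset ℕ) : Finset (Fin n) :=
  Finset.univ.filter (fun i : Fin n => (i : ℕ) + 1 ∈ A)

lemma phi_card {n : ℕ} {A : Finset ℕ} (hA : A ⊆ Finset.Icc 1 n) : #(phi n A) = #A := by
  classical
  refine Finset.card_bij (fun (i : Fin n) (_ : i ∈ phi n A) => (i : ℕ) + 1) ?_ ?_ ?_
  · intro i hi
    rw [phi, mem_filter] at hi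
    exact hi.2
  · intro i hi j hj hij
    exact Fin.val_injective (by omega)
  · intro x hx
    have hx' := hA hx
    rw [Finset.mem_Icc] at hx'
    refine ⟨⟨x - 1, by omega⟩, ?_, by simp; omega⟩
    rw [phi, mem_filter]
    refine ⟨Finset.mem_univ _, ?_⟩
    simpa using (show x - 1 + 1 = x by omega) ▸ hx

lemma phi_inter {n : ℕ} (A B : Finset ℕ) : phi n (A ∩ B) = phi n A ∩ phi n B := by
  ext i
  simp [phi, and_assoc]

lemma phi_nonempty {n : ℕ} {A : Finset ℕ} (hA : A ⊆ Finset.Icc 1 n) (h : A.Nonempty) :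
    (phi n A).Nonempty := by
  classical
  obtain ⟨x, hx⟩ := h
  have hx' := hA hx
  rw [Finset.mem_Icc] at hx'
  refine ⟨⟨x - 1, by omega⟩, ?_⟩
  rw [phi, mem_filter]
  exact ⟨Finset.mem_univ _, by simpa using (show x - 1 + 1 = x by omega) ▸ hx⟩

theorem stmt3 (m n kk : ℕ) (hm : 2 ≤ m) (hk : 1 ≤ kk) (hn : 2 * kk ≤ n)
    (F : Fin m → Finset (Finset ℕ))
    (hF : ∀ i, F i ⊆ (Finset.Icc 1 n).powersetCard kk)
    (hFne : ∀ i, (F i).Nonempty)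
    (hcross : ∀ i j, i ≠ j → ∀ A ∈ F i, ∀ B ∈ F j, (A ∩ B).Nonempty) :
    ∑ j, (F j).card ≤
      max (m * Nat.choose (n - 1) (kk - 1))
        (Nat.choose n kk - Nat.choose (n - kk) kk + m - 1) := by
  classical
  have hmem : ∀ i, ∀ A ∈ F i, A ⊆ Finset.Icc 1 n ∧ #A = kk := by
    intro i A hA
    exact mem_powersetCard.1 (hF i hA)
  -- transfer to Fin n
  set F' : Fin m → Finset (Finset (Fin n)) := fun i => (F i).image (phi n) with hF'_def
  have hinj : ∀ i, Set.InjOn (phi n) ((F i : Set (Finset ℕ))) := by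
    intro i A hA B hB hAB
    have hAm := (hmem i A hA).1
    have hBm := (hmem i B hB).1
    ext x
    constructor
    · intro hx
      have hx' := hAm hx
      rw [Finset.mem_Icc] at hx'
      have : (⟨x - 1, by omega⟩ : Fin n) ∈ phi n A := by
        rw [phi, mem_filter]
        exact ⟨Finset.mem_univ _, by simpa using (show x - 1 + 1 = x by omega) ▸ hx⟩
      rw [hAB] at this
      rw [phi, mem_filter] at this
      have : x - 1 + 1 ∈ B := by simpa using this.2
      rwa [show x - 1 + 1 = x by omega] at this
    · intro hx
      have hx' := hBm hx
      rw [Finset.mem_Icc] at hx'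
      have : (⟨x - 1, by omega⟩ : Fin n) ∈ phi n B := by
        rw [phi, mem_filter]
        exact ⟨Finset.mem_univ _, by simpa using (show x - 1 + 1 = x by omega) ▸ hx⟩
      rw [← hAB] at this
      rw [phi, mem_filter] at this
      have : x - 1 + 1 ∈ A := by simpa using this.2
      rwa [show x - 1 + 1 = x by omega] at this
  have hF'card : ∀ i, #(F' i) = #(F i) := by
    intro i
    rw [hF'_def]
    exact Finset.card_image_of_injOn (hinj i)
  have hF'sized : ∀ i, ∀ A ∈ F' i, #A = kk := by
    intro i A hA
    rw [hF'_def] at hA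
    obtain ⟨A₀, hA₀, rfl⟩ := mem_image.1 hA
    rw [phi_card (hmem i A₀ hA₀).1]
    exact (hmem i A₀ hA₀).2
  have hF'cross : ∀ i j, i ≠ j → ∀ A ∈ F' i, ∀ B ∈ F' j, (A ∩ B).Nonempty := by
    intro i j hij A hA B hB
    rw [hF'_def] at hA hB
    obtain ⟨A₀, hA₀, rfl⟩ := mem_image.1 hA
    obtain ⟨B₀, hB₀, rfl⟩ := mem_image.1 hB
    rw [← phi_inter]
    have h1 := hcross i j hij A₀ hA₀ B₀ hB₀
    apply phi_nonempty _ h1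
    exact le_trans (Finset.inter_subset_left) (hmem i A₀ hA₀).1
  -- argmax bookkeeping
  have hne : Nonempty (Fin m) := ⟨⟨0, by omega⟩⟩
  obtain ⟨i0, -, hi0⟩ := Finset.exists_max_image Finset.univ (fun i => #(F i))
    Finset.univ_nonempty
  have herase_ne : (Finset.univ.erase i0).Nonempty := by
    rw [← card_pos, Finset.card_erase_of_mem (Finset.mem_univ _)]
    rw [Finset.card_univ, Fintype.card_fin]
    omega
  obtain ⟨i1, hi1mem, hi1⟩ := Finset.exists_max_image (Finset.univ.erase i0)
    (fun i => #(F i)) herase_ne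
  have hi1ne : i1 ≠ i0 := (Finset.mem_erase.1 hi1mem).1
  -- sum bound
  have hsum : ∑ j, #(F j) ≤ #(F i0) + (m - 1) * #(F i1) := by
    rw [← Finset.add_sum_erase _ _ (Finset.mem_univ i0)]
    have : ∑ j ∈ Finset.univ.erase i0, #(F j) ≤ (m - 1) * #(F i1) := by
      have h1 : ∀ j ∈ Finset.univ.erase i0, #(F j) ≤ #(F i1) := hi1
      calc ∑ j ∈ Finset.univ.erase i0, #(F j)
          ≤ ∑ _j ∈ Finset.univ.erase i0, #(F i1) := Finset.sum_le_sum h1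
        _ = (m - 1) * #(F i1) := by
            rw [Finset.sum_const, Finset.card_erase_of_mem (Finset.mem_univ _),
              Finset.card_univ, Fintype.card_fin, smul_eq_mul]
    omega
  -- apply key
  set c : ℕ := m - 1 with hc_def
  have hkey := key (n := n) (k := kk) (c := c) hk hn (by omega)
    (F := F' i0) (G := F' i1) (hF'sized i0) (hF'sized i1)
    (by rw [hF'card, hF'card]; exact hi0 i1 (Finset.mem_univ _))
    (by
      rw [hF'_def]
      exact (hFne i1).image _)
    (hF'cross i0 i1 (Ne.symm hi1ne))
  rw [hF'card, hF'card] at hkey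
  have hle1 : Nat.choose (n - kk) kk ≤ Nat.choose n kk := Nat.choose_le_choose _ (by omega)
  have hm1 : (c + 1) = m := by omega
  have hmax : max ((c+1) * Nat.choose (n-1) (kk-1)) (Nat.choose n kk - Nat.choose (n-kk) kk + c)
      = max (m * Nat.choose (n - 1) (kk - 1)) (Nat.choose n kk - Nat.choose (n - kk) kk + m - 1) := by
    rw [hm1]
    congr 1
    omega
  rw [hmax] at hkey
  omega

end Main
end

section
/- Let n and k be positive integers with n ≥ 2k. If F_1, F_2 ⊆ binom([n],k) are non-empty cross-intersecting families, then |F_1| + |F_2| ≤ 1 + C(n,k) − C(n−k, k). -/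
open Finset UV
open scoped FinsetFamily

section Helpers

variable {i j k n : ℕ} {A B : Finset ℕ} {F F1 F2 : Finset (Finset ℕ)}

lemma compress_singleton (hij : i ≠ j) (hi : i ∉ A) (hj : j ∈ A) :
    UV.compress {i} {j} A = insert i (A.erase j) := by
  rw [UV.compress_of_disjoint_of_le (by simpa using hi) (by simpa using hj)]
  ext x
  simp only [sup_eq_union, mem_sdiff, mem_union, mem_singleton, mem_insert, mem_erase]
  constructor
  · rintro ⟨h1 | h1, h2⟩
    · exact Or.inr ⟨h2, h1⟩
    · exact Or.inl h1
  · rintro (rfl | ⟨h1, h2⟩)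
    · exact ⟨Or.inr rfl, hij⟩
    · exact ⟨Or.inl h2, h1⟩

lemma exists_src (hij : i ≠ j) (hA : A ∈ 𝓒 {i} {j} F) (hA' : A ∉ F) :
    i ∈ A ∧ j ∉ A ∧ insert j (A.erase i) ∈ F := by
  have h1 : i ∈ A := by
    have := UV.le_of_mem_compression_of_notMem hA hA'
    simpa using this
  have h2 : j ∉ A := by
    have := UV.disjoint_of_mem_compression_of_notMem hA hA'
    simpa using this
  have h3 := UV.sup_sdiff_mem_of_mem_compression_of_notMem hA hA'
  refine ⟨h1, h2, ?_⟩
  convert h3 using 1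
  ext x
  simp only [sup_eq_union, mem_sdiff, mem_union, mem_singleton, mem_insert, mem_erase]
  constructor
  · rintro (rfl | ⟨h4, h5⟩)
    · exact ⟨Or.inr rfl, fun h => hij h.symm⟩
    · exact ⟨Or.inl h5, h4⟩
  · rintro ⟨h4 | h4, h5⟩
    · exact Or.inr ⟨h5, h4⟩
    · exact Or.inl h4

lemma mem_of_self_mem_compression (hA : A ∈ 𝓒 {i} {j} F) (hA' : A ∈ F) :
    UV.compress {i} {j} A ∈ F := by
  rcases UV.mem_compression.1 hA with h | h
  · exact h.2
  · exact absurd hA' h.1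

lemma compression_subset_powersetCard {X : Finset ℕ} (hij : i ≠ j) (hiX : i ∈ X)
    (hF : F ⊆ powersetCard k X) : 𝓒 {i} {j} F ⊆ powersetCard k X := by
  intro A hA
  by_cases hA' : A ∈ F
  · exact hF hA'
  · obtain ⟨h1, h2, h3⟩ := exists_src hij hA hA'
    have hB := hF h3
    rw [mem_powersetCard] at hB ⊢
    obtain ⟨hBs, hBc⟩ := hB
    constructor
    · intro x hx
      rcases eq_or_ne x i with rfl | hxi
      · exact hiX
      · exact hBs (by simp [hx, hxi])
    · have : (insert j (A.erase i)).card = A.card := by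
        rw [card_insert_of_notMem (by simp [h2]), card_erase_of_mem h1]
        have : 1 ≤ A.card := card_pos.2 ⟨i, h1⟩
        omega
      omega

lemma cross_comp_aux (hij : i ≠ j)
    (h : ∀ A ∈ F1, ∀ B ∈ F2, (A ∩ B).Nonempty)
    (hA : A ∈ 𝓒 {i} {j} F1) (hA' : A ∈ F1)
    (hB : B ∈ 𝓒 {i} {j} F2) (hB' : B ∉ F2)
    (hd : ∀ x, x ∈ A → x ∈ B → False) : False := by
  obtain ⟨hiB, hjB, hsrc⟩ := exists_src hij hB hB'
  have hiA : i ∉ A := fun hc => hd i hc hiB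
  have hjA : j ∈ A := by
    obtain ⟨y, hy⟩ := h A hA' _ hsrc
    rw [mem_inter, mem_insert] at hy
    rcases hy with ⟨hy1, rfl | hy2⟩
    · exact hy1
    · exact (hd y hy1 (mem_of_mem_erase hy2)).elim
  have hcA : insert i (A.erase j) ∈ F1 := by
    have := mem_of_self_mem_compression hA hA'
    rwa [compress_singleton hij hiA hjA] at this
  obtain ⟨y, hy⟩ := h _ hcA _ hsrc
  rw [mem_inter, mem_insert, mem_insert] at hy
  obtain ⟨hy1 | hy1, hy2 | hy2⟩ := hy
  · exact hij (hy1.symm.trans hy2)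
  · exact notMem_erase i B (hy1 ▸ hy2)
  · exact notMem_erase j A (hy2 ▸ hy1)
  · exact hd y (mem_of_mem_erase hy1) (mem_of_mem_erase hy2)

lemma cross_compression (hij : i ≠ j)
    (h : ∀ A ∈ F1, ∀ B ∈ F2, (A ∩ B).Nonempty) :
    ∀ A ∈ 𝓒 {i} {j} F1, ∀ B ∈ 𝓒 {i} {j} F2, (A ∩ B).Nonempty := by
  intro A hA B hB
  by_contra hne
  have hd : ∀ x, x ∈ A → x ∈ B → False := fun x h1 h2 => hne ⟨x, mem_inter.2 ⟨h1, h2⟩⟩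
  by_cases hA' : A ∈ F1 <;> by_cases hB' : B ∈ F2
  · exact hne (h A hA' B hB')
  · exact cross_comp_aux hij h hA hA' hB hB' hd
  · exact cross_comp_aux hij (fun B hB A hA => by rw [inter_comm]; exact h A hA B hB)
      hB hB' hA hA' (fun x h1 h2 => hd x h2 h1)
  · obtain ⟨hiA, -, -⟩ := exists_src hij hA hA'
    obtain ⟨hiB, -, -⟩ := exists_src hij hB hB'
    exact hd i hiA hiB

/-- measure of a set family, used for termination of the shifting process -/
def meas (F : Finset (Finset ℕ)) : ℕ := ∑ A ∈ F, ∑ x ∈ A, x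

lemma moved_spec (hA : A ∈ F) (hcA : UV.compress {i} {j} A ∉ F) : i ∉ A ∧ j ∈ A := by
  by_contra hc
  have hcond : ¬(Disjoint ({i} : Finset ℕ) A ∧ ({j} : Finset ℕ) ≤ A) := by
    rw [disjoint_singleton_left]
    rw [show (({j} : Finset ℕ) ≤ A) = (({j} : Finset ℕ) ⊆ A) from rfl, singleton_subset_iff]
    tauto
  rw [UV.compress, if_neg hcond] at hcA
  exact hcA hA

lemma meas_compression_lt (hij : i < j) (hne : 𝓒 {i} {j} F ≠ F) :
    meas (𝓒 {i} {j} F) < meas F := by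
  classical
  set c := UV.compress ({i} : Finset ℕ) {j} with hc
  have hmoved : (F.filter fun A => c A ∉ F).Nonempty := by
    rw [filter_nonempty_iff]
    by_contra hcon
    push_neg at hcon
    apply hne
    rw [UV.compression]
    have h1 : (F.filter fun A => c A ∈ F) = F := filter_true_of_mem hcon
    have h2 : ((F.image c).filter fun A => A ∉ F) = ∅ := by
      rw [filter_eq_empty_iff]
      rintro A hA
      obtain ⟨B, hB, rfl⟩ := mem_image.1 hA
      simp only [not_not]
      exact hcon B hB
    rw [h1, h2, union_empty]
  have hkey : ∀ A ∈ F.filter fun A => c A ∉ F, (∑ x ∈ c A, x) < ∑ x ∈ A, x := by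
    intro A hA
    rw [mem_filter] at hA
    obtain ⟨hiA, hjA⟩ := moved_spec hA.1 hA.2
    rw [hc, compress_singleton (Nat.ne_of_lt hij) hiA hjA,
      sum_insert (fun hmem => hiA (mem_of_mem_erase hmem))]
    have h2 : (∑ x ∈ A.erase j, x) + j = ∑ x ∈ A, x := by
      simpa using Finset.sum_erase_add A (fun x => x) hjA
    omega
  have hsplit : meas F = (∑ A ∈ F.filter fun A => c A ∈ F, ∑ x ∈ A, x)
      + ∑ A ∈ F.filter fun A => c A ∉ F, ∑ x ∈ A, x := by
    rw [meas, ← sum_union (disjoint_filter_filter_not F F _), filter_union_filter_not_eq]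
  have hmeasC : meas (𝓒 {i} {j} F) = (∑ A ∈ F.filter fun A => c A ∈ F, ∑ x ∈ A, x)
      + ∑ A ∈ F.filter fun A => c A ∉ F, ∑ x ∈ c A, x := by
    rw [meas, UV.compression, sum_union UV.compress_disjoint, filter_image,
      sum_image (UV.compress_injOn.mono (by intro x hx; exact hx))]
  rw [hmeasC, hsplit]
  exact Nat.add_lt_add_left (sum_lt_sum_of_nonempty hmoved hkey) _

lemma meas_compression_le (hij : i < j) (F : Finset (Finset ℕ)) :
    meas (𝓒 {i} {j} F) ≤ meas F := by
  by_cases h : 𝓒 {i} {j} F = F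
  · rw [h]
  · exact (meas_compression_lt hij h).le

lemma count_meet {X B : Finset ℕ} {r : ℕ} (hB : B ⊆ X) (F : Finset (Finset ℕ))
    (hF : F ⊆ powersetCard r X) (hmeet : ∀ A ∈ F, (A ∩ B).Nonempty) :
    F.card + (X.card - B.card).choose r ≤ X.card.choose r := by
  have hdisj : Disjoint F (powersetCard r (X \ B)) := by
    rw [disjoint_left]
    intro A hA hA2
    obtain ⟨y, hy⟩ := hmeet A hA
    rw [mem_powersetCard] at hA2
    rw [mem_inter] at hy
    exact (mem_sdiff.1 (hA2.1 hy.1)).2 hy.2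
  have hsub : F ∪ powersetCard r (X \ B) ⊆ powersetCard r X :=
    union_subset hF (powersetCard_mono sdiff_subset)
  have hc := card_le_card hsub
  rw [card_union_of_disjoint hdisj, card_powersetCard, card_sdiff_of_subset hB,
    card_powersetCard] at hc
  exact hc

end Helpers

theorem key_s4 : ∀ n k (F1 F2 : Finset (Finset ℕ)), 1 ≤ k → 2 * k ≤ n →
    F1 ⊆ powersetCard k (Icc 1 n) → F2 ⊆ powersetCard k (Icc 1 n) →
    F1.Nonempty → F2.Nonempty →
    (∀ A ∈ F1, ∀ B ∈ F2, (A ∩ B).Nonempty) →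
    F1.card + F2.card + (n - k).choose k ≤ 1 + n.choose k := by
  intro n
  induction n using Nat.strong_induction_on with
  | _ n IH =>
  intro k F1 F2 hk hn hF1 hF2 hne1 hne2 hcross
  rcases eq_or_lt_of_le hn with heq | hlt
  · -- base case n = 2k
    classical
    set X := Icc 1 n with hX
    have hXcard : X.card = n := by rw [hX, Nat.card_Icc]; omega
    set G2 := F2.image (fun B => X \ B) with hG2
    have hG2card : G2.card = F2.card := by
      rw [hG2]
      apply card_image_of_injOn
      intro A hA B hB hAB
      have hA' : A ⊆ X := (mem_powersetCard.1 (hF2 hA)).1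
      have hB' : B ⊆ X := (mem_powersetCard.1 (hF2 hB)).1
      have h3 : X \ (X \ A) = X \ (X \ B) := by
        rw [show X \ A = X \ B from hAB]
      rwa [Finset.sdiff_sdiff_eq_self hA', Finset.sdiff_sdiff_eq_self hB'] at h3
    have hdisj : Disjoint F1 G2 := by
      rw [disjoint_right]
      intro A hA hA1
      obtain ⟨B, hB, rfl⟩ := mem_image.1 hA
      obtain ⟨y, hy⟩ := hcross _ hA1 B hB
      rw [mem_inter, mem_sdiff] at hy
      exact hy.1.2 hy.2
    have hsub : F1 ∪ G2 ⊆ powersetCard k X := by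
      apply union_subset hF1
      intro A hA
      obtain ⟨B, hB, rfl⟩ := mem_image.1 hA
      have hB' := mem_powersetCard.1 (hF2 hB)
      rw [mem_powersetCard]
      refine ⟨sdiff_subset, ?_⟩
      rw [card_sdiff_of_subset hB'.1, hXcard, hB'.2]
      omega
    have hcard := card_le_card hsub
    rw [card_union_of_disjoint hdisj, card_powersetCard, hXcard, hG2card] at hcard
    have h1 : n - k = k := by omega
    rw [h1, Nat.choose_self]
    omega
  · -- inductive case 2k < n
    classical
    have hinner : ∀ M (F1 F2 : Finset (Finset ℕ)),
        meas F1 + meas F2 ≤ M →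
        F1 ⊆ powersetCard k (Icc 1 n) → F2 ⊆ powersetCard k (Icc 1 n) →
        F1.Nonempty → F2.Nonempty →
        (∀ A ∈ F1, ∀ B ∈ F2, (A ∩ B).Nonempty) →
        F1.card + F2.card + (n - k).choose k ≤ 1 + n.choose k := by
      intro M
      induction M with
      | zero =>
        intro F1 F2 hM hF1 hF2 hne1 hne2 hcross
        exfalso
        obtain ⟨A, hA⟩ := hne1
        obtain ⟨hAs, hAc⟩ := mem_powersetCard.1 (hF1 hA)
        have hAne : A.Nonempty := card_pos.1 (by omega)
        obtain ⟨x, hx⟩ := hAne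
        have hx1 : 1 ≤ x := (mem_Icc.1 (hAs hx)).1
        have h1 : x ≤ ∑ y ∈ A, y := single_le_sum (fun y _ => Nat.zero_le y) hx
        have h2 : (∑ y ∈ A, y) ≤ meas F1 := by
          rw [meas]
          exact single_le_sum (f := fun A => ∑ y ∈ A, y) (fun B _ => Nat.zero_le _) hA
        omega
      | succ M ihM =>
        intro F1 F2 hM hF1 hF2 hne1 hne2 hcross
        by_cases hsh : ∀ i j : ℕ, i ∈ Icc 1 n → j ∈ Icc 1 n → i < j →
            𝓒 {i} {j} F1 = F1 ∧ 𝓒 {i} {j} F2 = F2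
        · -- shifted case
          clear hM ihM M
          obtain ⟨k', rfl⟩ : ∃ k', k = k' + 1 := ⟨k - 1, by omega⟩
          obtain ⟨m, rfl⟩ : ∃ m, n = m + 1 := ⟨n - 1, by omega⟩
          have hm2k : 2 * (k' + 1) ≤ m := by omega
          set F1p := F1.filter (fun A => (m+1) ∉ A) with hF1p
          set F2p := F2.filter (fun A => (m+1) ∉ A) with hF2p
          set L1 := F1.filter (fun A => (m+1) ∈ A) with hL1
          set L2 := F2.filter (fun A => (m+1) ∈ A) with hL2
          set F1d := L1.image (fun A => A.erase (m+1)) with hF1d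
          set F2d := L2.image (fun A => A.erase (m+1)) with hF2d
          have hsplit1 : L1.card + F1p.card = F1.card :=
            card_filter_add_card_filter_not (p := fun A => (m+1) ∈ A)
          have hsplit2 : L2.card + F2p.card = F2.card :=
            card_filter_add_card_filter_not (p := fun A => (m+1) ∈ A)
          have hinj : ∀ L : Finset (Finset ℕ), L = L.filter (fun A => (m+1) ∈ A) → True := fun _ _ => trivial
          have hd1 : F1d.card = L1.card := by
            rw [hF1d]
            apply card_image_of_injOn
            intro A hA B hB h
            rw [mem_coe, mem_filter] at hA hB
            have := congrArg (insert (m+1)) h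
            rwa [insert_erase hA.2, insert_erase hB.2] at this
          have hd2 : F2d.card = L2.card := by
            rw [hF2d]
            apply card_image_of_injOn
            intro A hA B hB h
            rw [mem_coe, mem_filter] at hA hB
            have := congrArg (insert (m+1)) h
            rwa [insert_erase hA.2, insert_erase hB.2] at this
          have hsubp : ∀ (F G : Finset (Finset ℕ)), F ⊆ powersetCard (k'+1) (Icc 1 (m+1)) →
              G = F.filter (fun A => (m+1) ∉ A) → G ⊆ powersetCard (k'+1) (Icc 1 m) := by
            intro F G hF hG
            intro A hA
            rw [hG, mem_filter] at hA
            obtain ⟨hs, hc⟩ := mem_powersetCard.1 (hF hA.1)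
            refine mem_powersetCard.2 ⟨?_, hc⟩
            intro x hx
            have h1 := mem_Icc.1 (hs hx)
            have h2 : x ≠ m + 1 := fun h => hA.2 (h ▸ hx)
            rw [mem_Icc]
            omega
          have hF1p_sub := hsubp F1 F1p hF1 hF1p
          have hF2p_sub := hsubp F2 F2p hF2 hF2p
          have hsubd : ∀ (F L D : Finset (Finset ℕ)), F ⊆ powersetCard (k'+1) (Icc 1 (m+1)) →
              L = F.filter (fun A => (m+1) ∈ A) → D = L.image (fun A => A.erase (m+1)) →
              D ⊆ powersetCard k' (Icc 1 m) := by
            intro F L D hF hL hD A' hA'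
            rw [hD] at hA'
            obtain ⟨A, hA, rfl⟩ := mem_image.1 hA'
            rw [hL, mem_filter] at hA
            obtain ⟨hs, hc⟩ := mem_powersetCard.1 (hF hA.1)
            refine mem_powersetCard.2 ⟨?_, ?_⟩
            · intro x hx
              rw [mem_erase] at hx
              have h1 := mem_Icc.1 (hs hx.2)
              rw [mem_Icc]
              have := hx.1
              omega
            · rw [card_erase_of_mem hA.2, hc]
              omega
          have hF1d_sub := hsubd F1 L1 F1d hF1 hL1 hF1d
          have hF2d_sub := hsubd F2 L2 F2d hF2 hL2 hF2d
          -- nonemptiness of the primed families, via shiftedness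
          have hpne : ∀ (F G : Finset (Finset ℕ)), F ⊆ powersetCard (k'+1) (Icc 1 (m+1)) →
              F.Nonempty → (∀ i j : ℕ, i ∈ Icc 1 (m+1) → j ∈ Icc 1 (m+1) → i < j →
                𝓒 {i} {j} F = F) →
              G = F.filter (fun A => (m+1) ∉ A) → G.Nonempty := by
            intro F G hF hne hshF hG
            obtain ⟨A, hA⟩ := hne
            by_cases hnA : (m+1) ∈ A
            · obtain ⟨hs, hc⟩ := mem_powersetCard.1 (hF hA)
              have hex : (Icc 1 m \ A).Nonempty := by
                rw [← card_pos]
                have h2 := Finset.le_card_sdiff A (Icc 1 m)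
                have h3 : (Icc 1 m).card = m := by rw [Nat.card_Icc]; omega
                omega
              obtain ⟨x, hx⟩ := hex
              rw [mem_sdiff, mem_Icc] at hx
              have hcomp := hshF x (m+1) (by rw [mem_Icc]; omega) (by rw [mem_Icc]; omega)
                (by omega)
              have hmem : insert x (A.erase (m+1)) ∈ F := by
                have h3 := UV.compress_mem_compression (u := ({x} : Finset ℕ))
                  (v := ({m+1} : Finset ℕ)) hA
                rw [hcomp] at h3
                rwa [compress_singleton (by omega) hx.2 hnA] at h3
              refine ⟨_, hG ▸ mem_filter.2 ⟨hmem, ?_⟩⟩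
              intro hcon
              rcases mem_insert.1 hcon with h | h
              · omega
              · exact notMem_erase _ _ h
            · exact ⟨A, hG ▸ mem_filter.2 ⟨hA, hnA⟩⟩
          have hF1p_ne : F1p.Nonempty := hpne F1 F1p hF1 hne1
            (fun i j hi hj hij => (hsh i j hi hj hij).1) hF1p
          have hF2p_ne : F2p.Nonempty := hpne F2 F2p hF2 hne2
            (fun i j hi hj hij => (hsh i j hi hj hij).2) hF2p
          have hcrossp : ∀ A ∈ F1p, ∀ B ∈ F2p, (A ∩ B).Nonempty := by
            intro A hA B hB
            rw [hF1p, mem_filter] at hA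
            rw [hF2p, mem_filter] at hB
            exact hcross A hA.1 B hB.1
          have bound1 := IH m (by omega) (k'+1) F1p F2p (by omega) hm2k
            hF1p_sub hF2p_sub hF1p_ne hF2p_ne hcrossp
          -- cross-intersection of the double-primed families
          have hcrossd : ∀ A' ∈ F1d, ∀ B' ∈ F2d, (A' ∩ B').Nonempty := by
            intro A' hA' B' hB'
            rw [hF1d] at hA'
            rw [hF2d] at hB'
            obtain ⟨A, hA, rfl⟩ := mem_image.1 hA'
            obtain ⟨B, hB, rfl⟩ := mem_image.1 hB'
            rw [hL1, mem_filter] at hA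
            rw [hL2, mem_filter] at hB
            by_contra hcon
            have hd : ∀ x, x ∈ A.erase (m+1) → x ∈ B.erase (m+1) → False :=
              fun x h1 h2 => hcon ⟨x, mem_inter.2 ⟨h1, h2⟩⟩
            have hAc := (mem_powersetCard.1 (hF1 hA.1)).2
            have hBc := (mem_powersetCard.1 (hF2 hB.1)).2
            have hUcard : (A ∪ B).card + 1 ≤ 2 * (k'+1) := by
              have h1 := card_union_add_card_inter A B
              have h2 : 1 ≤ (A ∩ B).card := card_pos.2 ⟨m+1, mem_inter.2 ⟨hA.2, hB.2⟩⟩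
              omega
            have hex : (Icc 1 (m+1) \ (A ∪ B)).Nonempty := by
              rw [← card_pos]
              have h2 := Finset.le_card_sdiff (A ∪ B) (Icc 1 (m+1))
              have h3 : (Icc 1 (m+1)).card = m + 1 := by rw [Nat.card_Icc]; omega
              omega
            obtain ⟨x, hx⟩ := hex
            rw [mem_sdiff, mem_union] at hx
            have hxA : x ∉ A := fun h => hx.2 (Or.inl h)
            have hxB : x ∉ B := fun h => hx.2 (Or.inr h)
            have hxne : x ≠ m+1 := fun h => hx.2 (Or.inl (h ▸ hA.2))
            have hxmem := hx.1
            rw [mem_Icc] at hxmem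
            have hcomp := (hsh x (m+1) hx.1 (by rw [mem_Icc]; omega) (by omega)).1
            have hmem : insert x (A.erase (m+1)) ∈ F1 := by
              have h3 := UV.compress_mem_compression (u := ({x} : Finset ℕ))
                (v := ({m+1} : Finset ℕ)) hA.1
              rw [hcomp] at h3
              rwa [compress_singleton (by omega) hxA hA.2] at h3
            obtain ⟨y, hy⟩ := hcross _ hmem B hB.1
            rw [mem_inter, mem_insert] at hy
            rcases hy with ⟨rfl | h1, h2⟩
            · exact hxB h2
            · exact hd y h1 (mem_erase.2 ⟨(mem_erase.1 h1).1, h2⟩)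
          -- arithmetic preliminaries
          have hp1 : (m+1).choose (k'+1) = m.choose k' + m.choose (k'+1) :=
            Nat.choose_succ_succ m k'
          have hd2' : m + 1 - (k'+1) = (m - (k'+1)) + 1 := by omega
          have hp2 : ((m - (k'+1))+1).choose (k'+1)
              = (m - (k'+1)).choose k' + (m - (k'+1)).choose (k'+1) :=
            Nat.choose_succ_succ _ k'
          have hmono : (m - (k'+1)).choose k' ≤ m.choose k' :=
            Nat.choose_le_choose k' (by omega)
          rw [hd2', hp2] at *
          by_cases hc1 : F1d = ∅ <;> by_cases hc2 : F2d = ∅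
          · -- both double-primed empty
            have e1 : L1.card = 0 := by rw [← hd1, hc1, card_empty]
            have e2 : L2.card = 0 := by rw [← hd2, hc2, card_empty]
            omega
          · -- F1d empty, F2d nonempty
            have e1 : L1.card = 0 := by rw [← hd1, hc1, card_empty]
            obtain ⟨A₀, hA₀⟩ := hF1p_ne
            have hA₀' := mem_powersetCard.1 (hF1p_sub hA₀)
            have hmeets : ∀ B' ∈ F2d, (B' ∩ A₀).Nonempty := by
              intro B' hB'
              rw [hF2d] at hB'
              obtain ⟨B, hB, rfl⟩ := mem_image.1 hB'
              rw [hL2, mem_filter] at hB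
              rw [hF1p, mem_filter] at hA₀
              obtain ⟨y, hy⟩ := hcross A₀ hA₀.1 B hB.1
              rw [mem_inter] at hy
              have hym : y ≠ m + 1 := by
                intro h
                exact hA₀.2 (h ▸ hy.1)
              exact ⟨y, mem_inter.2 ⟨mem_erase.2 ⟨hym, hy.2⟩, hy.1⟩⟩
            have hcount := count_meet hA₀'.1 F2d hF2d_sub hmeets
            have hIm : (Icc 1 m).card = m := by rw [Nat.card_Icc]; omega
            rw [hIm, hA₀'.2] at hcount
            omega
          · -- F2d empty, F1d nonempty (symmetric)
            have e2 : L2.card = 0 := by rw [← hd2, hc2, card_empty]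
            obtain ⟨B₀, hB₀⟩ := hF2p_ne
            have hB₀' := mem_powersetCard.1 (hF2p_sub hB₀)
            have hmeets : ∀ A' ∈ F1d, (A' ∩ B₀).Nonempty := by
              intro A' hA'
              rw [hF1d] at hA'
              obtain ⟨A, hA, rfl⟩ := mem_image.1 hA'
              rw [hL1, mem_filter] at hA
              rw [hF2p, mem_filter] at hB₀
              obtain ⟨y, hy⟩ := hcross A hA.1 B₀ hB₀.1
              rw [mem_inter] at hy
              have hym : y ≠ m + 1 := by
                intro h
                exact hB₀.2 (h ▸ hy.2)
              exact ⟨y, mem_inter.2 ⟨mem_erase.2 ⟨hym, hy.1⟩, hy.2⟩⟩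
            have hcount := count_meet hB₀'.1 F1d hF1d_sub hmeets
            have hIm : (Icc 1 m).card = m := by rw [Nat.card_Icc]; omega
            rw [hIm, hB₀'.2] at hcount
            omega
          · -- both double-primed nonempty
            have hne1d : F1d.Nonempty := nonempty_iff_ne_empty.2 hc1
            have hne2d : F2d.Nonempty := nonempty_iff_ne_empty.2 hc2
            rcases Nat.eq_zero_or_pos k' with rfl | hk'pos
            · -- k' = 0 : contradiction
              exfalso
              obtain ⟨A', hA'⟩ := hne1d
              obtain ⟨B', hB'⟩ := hne2d
              have h1 := (mem_powersetCard.1 (hF1d_sub hA')).2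
              have h2 := (mem_powersetCard.1 (hF2d_sub hB')).2
              have h3 := hcrossd A' hA' B' hB'
              rw [card_eq_zero.1 h1, card_eq_zero.1 h2] at h3
              simp at h3
            · obtain ⟨k'', hk''⟩ : ∃ k'', k' = k'' + 1 := ⟨k' - 1, by omega⟩
              have bound2 := IH m (by omega) k' F1d F2d hk'pos (by omega)
                hF1d_sub hF2d_sub hne1d hne2d hcrossd
              have heq2 : m - k' = (m - (k'+1)) + 1 := by omega
              rw [heq2] at bound2
              have hp3 : ((m - (k'+1))+1).choose k'
                  = (m - (k'+1)).choose k'' + (m - (k'+1)).choose k' := by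
                rw [hk'']
                exact Nat.choose_succ_succ _ k''
              have hpos : 1 ≤ (m - (k'+1)).choose k'' :=
                Nat.choose_pos (by omega)
              omega
        · -- compress and recurse
          push_neg at hsh
          obtain ⟨i, j, hi, hj, hij, hnef⟩ := hsh
          have hmle : meas (𝓒 {i} {j} F1) + meas (𝓒 {i} {j} F2) ≤ M := by
            have l1 := meas_compression_le (F := F1) hij
            have l2 := meas_compression_le (F := F2) hij
            by_cases h1 : 𝓒 {i} {j} F1 = F1
            · have := meas_compression_lt hij (hnef h1)
              omega
            · have := meas_compression_lt hij h1
              omega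
          have hb := ihM (𝓒 {i} {j} F1) (𝓒 {i} {j} F2) hmle
            (compression_subset_powersetCard (Nat.ne_of_lt hij) hi hF1)
            (compression_subset_powersetCard (Nat.ne_of_lt hij) hi hF2)
            (by rw [← card_pos, UV.card_compression]; exact card_pos.2 hne1)
            (by rw [← card_pos, UV.card_compression]; exact card_pos.2 hne2)
            (cross_compression (Nat.ne_of_lt hij) hcross)
          rwa [UV.card_compression, UV.card_compression] at hb
    exact hinner (meas F1 + meas F2) F1 F2 le_rfl hF1 hF2 hne1 hne2 hcross

theorem stmt4 (n k : ℕ) (hk : 1 ≤ k) (hn : 2 * k ≤ n)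
    (F1 F2 : Finset (Finset ℕ))
    (hF1 : F1 ⊆ (Finset.Icc 1 n).powersetCard k)
    (hF2 : F2 ⊆ (Finset.Icc 1 n).powersetCard k)
    (hne1 : F1.Nonempty) (hne2 : F2.Nonempty)
    (hcross : ∀ A ∈ F1, ∀ B ∈ F2, (A ∩ B).Nonempty) :
    F1.card + F2.card ≤ 1 + Nat.choose n k - Nat.choose (n - k) k := by
  have h1 := key_s4 n k F1 F2 hk hn hF1 hF2 hne1 hne2 hcross
  have h2 : (n - k).choose k ≤ n.choose k := Nat.choose_le_choose k (Nat.sub_le n k)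
  omega
end

section
/- Let A ⊆ binom([n],k_1) and B ⊆ binom([n],k_2) be cross-intersecting families. Then A_L and B_L are cross-intersecting, where A_L (respectively B_L) denotes the family consisting of the first |A| sets of binom([n],k_1) (respectively the first |B| sets of binom([n],k_2)) in the lexicographic order. -/
open Finset Finset.Colex

/-- Lexicographic order on finite sets of naturals: A ≺_L B iff min(A\B) < min(B\A). -/
def lexLt (A B : Finset ℕ) : Prop := (A \ B).min < (B \ A).min

section Aux

variable {n : ℕ}

/-- Order-reversing map from `Icc 1 n` to `Fin n`. -/
def fmap (hn : 0 < n) (x : ℕ) : Fin n := ⟨(n - x) % n, Nat.mod_lt _ hn⟩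

lemma fmap_coe (hn : 0 < n) {x : ℕ} (hx : x ∈ Finset.Icc 1 n) :
    ((fmap hn x : Fin n) : ℕ) = n - x := by
  simp only [Finset.mem_Icc] at hx
  have : n - x < n := by omega
  simp [fmap, Nat.mod_eq_of_lt this]

lemma fmap_injOn (hn : 0 < n) {x y : ℕ} (hx : x ∈ Finset.Icc 1 n)
    (hy : y ∈ Finset.Icc 1 n) (h : fmap hn x = fmap hn y) : x = y := by
  have h' := congrArg (Fin.val) h
  rw [fmap_coe hn hx, fmap_coe hn hy] at h'
  simp only [Finset.mem_Icc] at hx hy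
  omega

lemma fmap_lt (hn : 0 < n) {x y : ℕ} (hx : x ∈ Finset.Icc 1 n)
    (hy : y ∈ Finset.Icc 1 n) (h : x < y) : fmap hn y < fmap hn x := by
  have hx' := fmap_coe hn hx
  have hy' := fmap_coe hn hy
  simp only [Finset.mem_Icc] at hx hy
  rw [Fin.lt_def, hx', hy']
  omega

/-- Image map on finsets. -/
def Fm (hn : 0 < n) (S : Finset ℕ) : Finset (Fin n) := S.image (fmap hn)

lemma Fm_card (hn : 0 < n) {S : Finset ℕ} (hS : S ⊆ Finset.Icc 1 n) :
    (Fm hn S).card = S.card :=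
  Finset.card_image_of_injOn fun _x hx _y hy h => fmap_injOn hn (hS hx) (hS hy) h

lemma mem_Fm {hn : 0 < n} {S : Finset ℕ} {a : Fin n} :
    a ∈ Fm hn S ↔ ∃ x ∈ S, fmap hn x = a := by simp [Fm]

lemma Fm_inj (hn : 0 < n) {S T : Finset ℕ} (hS : S ⊆ Finset.Icc 1 n)
    (hT : T ⊆ Finset.Icc 1 n) (h : Fm hn S = Fm hn T) : S = T := by
  apply Finset.Subset.antisymm <;> intro x hx
  · have : fmap hn x ∈ Fm hn T := h ▸ (Finset.mem_image_of_mem _ hx)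
    obtain ⟨y, hy, hxy⟩ := mem_Fm.mp this
    rwa [fmap_injOn hn (hT hy) (hS hx) hxy] at hy
  · have : fmap hn x ∈ Fm hn S := h ▸ (Finset.mem_image_of_mem _ hx)
    obtain ⟨y, hy, hxy⟩ := mem_Fm.mp this
    rwa [fmap_injOn hn (hS hy) (hT hx) hxy] at hy

lemma Fm_Icc (hn : 0 < n) : Fm hn (Finset.Icc 1 n) = Finset.univ := by
  apply Finset.eq_univ_of_card
  rw [Fm_card hn (Finset.Subset.refl _)]
  simp

/-- Preimage map. -/
def Pm (hn : 0 < n) (T : Finset (Fin n)) : Finset ℕ :=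
  (Finset.Icc 1 n).filter (fun x => fmap hn x ∈ T)

lemma Pm_subset (hn : 0 < n) (T : Finset (Fin n)) : Pm hn T ⊆ Finset.Icc 1 n :=
  Finset.filter_subset _ _

lemma Fm_Pm (hn : 0 < n) (T : Finset (Fin n)) : Fm hn (Pm hn T) = T := by
  apply Finset.Subset.antisymm
  · intro a ha
    obtain ⟨x, hx, rfl⟩ := mem_Fm.mp ha
    exact (Finset.mem_filter.mp hx).2
  · intro a ha
    have : a ∈ Fm hn (Finset.Icc 1 n) := by rw [Fm_Icc]; exact Finset.mem_univ a
    obtain ⟨x, hx, rfl⟩ := mem_Fm.mp this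
    exact mem_Fm.mpr ⟨x, Finset.mem_filter.mpr ⟨hx, ha⟩, rfl⟩

lemma Pm_card (hn : 0 < n) (T : Finset (Fin n)) : (Pm hn T).card = T.card := by
  conv_rhs => rw [← Fm_Pm hn T]
  rw [Fm_card hn (Pm_subset hn T)]

/-- lexLt transfers to reversed colex. -/
lemma lexLt_toColex (hn : 0 < n) {X Y : Finset ℕ} (hX : X ⊆ Finset.Icc 1 n)
    (hY : Y ⊆ Finset.Icc 1 n) (h : lexLt X Y) :
    toColex (Fm hn Y) < toColex (Fm hn X) := by
  unfold lexLt at h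
  have hne : (X \ Y).Nonempty := by
    by_contra hc
    rw [Finset.not_nonempty_iff_eq_empty] at hc
    rw [hc] at h
    simp at h
  obtain ⟨m, hmin⟩ := Finset.min_of_nonempty hne
  have hmem : m ∈ X \ Y := Finset.mem_of_min hmin
  rw [Finset.Colex.toColex_lt_toColex_iff_exists_forall_lt]
  have hmX : m ∈ X := (Finset.mem_sdiff.mp hmem).1
  have hmY : m ∉ Y := (Finset.mem_sdiff.mp hmem).2
  refine ⟨fmap hn m, mem_Fm.mpr ⟨m, hmX, rfl⟩, ?_, ?_⟩
  · intro hc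
    obtain ⟨y, hy, hxy⟩ := mem_Fm.mp hc
    exact hmY (by rwa [fmap_injOn hn (hY hy) (hX hmX) hxy] at hy)
  · intro b hb hbX
    obtain ⟨y, hy, rfl⟩ := mem_Fm.mp hb
    have hyX : y ∉ X := fun hc => hbX (mem_Fm.mpr ⟨y, hc, rfl⟩)
    have hySd : y ∈ Y \ X := Finset.mem_sdiff.mpr ⟨hy, hyX⟩
    have hle : (Y \ X).min ≤ (y : WithTop ℕ) := Finset.min_le hySd
    have : (m : WithTop ℕ) < (y : WithTop ℕ) := lt_of_lt_of_le (by rw [hmin] at h; exact h) hle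
    have hmy : m < y := by exact_mod_cast this
    exact fmap_lt hn (hX hmX) (hY hy) hmy

/-- Trichotomy for lexLt on equal-card sets. -/
lemma lexLt_trichotomy {k : ℕ} {X Y : Finset ℕ} (hX : X.card = k) (hY : Y.card = k)
    (hne : X ≠ Y) : lexLt X Y ∨ lexLt Y X := by
  have h1 : (X \ Y).Nonempty := by
    rw [Finset.sdiff_nonempty]
    intro hc
    exact hne (Finset.eq_of_subset_of_card_le hc (by omega))
  have h2 : (Y \ X).Nonempty := by
    rw [Finset.sdiff_nonempty]
    intro hc
    exact hne (Finset.eq_of_subset_of_card_le hc (by omega)).symm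
  obtain ⟨m1, hm1⟩ := h1
  obtain ⟨m2, hm2⟩ := h2
  have hXmin : ∃ a : ℕ, (X \ Y).min = (a : WithTop ℕ) ∧ a ∈ X \ Y := by
    obtain ⟨a, ha⟩ := Finset.min_of_nonempty ⟨m1, hm1⟩
    exact ⟨a, ha, Finset.mem_of_min ha⟩
  have hYmin : ∃ a : ℕ, (Y \ X).min = (a : WithTop ℕ) ∧ a ∈ Y \ X := by
    obtain ⟨a, ha⟩ := Finset.min_of_nonempty ⟨m2, hm2⟩
    exact ⟨a, ha, Finset.mem_of_min ha⟩
  obtain ⟨a, ha, haX⟩ := hXmin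
  obtain ⟨b, hb, hbY⟩ := hYmin
  have hab : a ≠ b := by
    intro hc
    subst hc
    exact (Finset.mem_sdiff.mp hbY).2 (Finset.mem_sdiff.mp haX).1
  unfold lexLt
  rw [ha, hb]
  rcases lt_or_gt_of_ne hab with h | h
  · left; exact_mod_cast h
  · right; exact_mod_cast h

/-- Converse: colex inequality implies lexLt for equal-card sets. -/
lemma toColex_lexLt (hn : 0 < n) {k : ℕ} {X Y : Finset ℕ}
    (hX : X ∈ (Finset.Icc 1 n).powersetCard k) (hY : Y ∈ (Finset.Icc 1 n).powersetCard k)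
    (h : toColex (Fm hn Y) < toColex (Fm hn X)) : lexLt X Y := by
  obtain ⟨hXs, hXc⟩ := Finset.mem_powersetCard.mp hX
  obtain ⟨hYs, hYc⟩ := Finset.mem_powersetCard.mp hY
  have hne : X ≠ Y := by
    rintro rfl
    exact lt_irrefl _ h
  rcases lexLt_trichotomy hXc hYc hne with h' | h'
  · exact h'
  · exact absurd (lexLt_toColex hn hYs hXs h') (fun hc => (lt_asymm h) hc)

end Aux

theorem stmt6 (n k1 k2 : ℕ)
    (A B : Finset (Finset ℕ))
    (hA : A ⊆ (Finset.Icc 1 n).powersetCard k1)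
    (hB : B ⊆ (Finset.Icc 1 n).powersetCard k2)
    (hcross : ∀ X ∈ A, ∀ Y ∈ B, (X ∩ Y).Nonempty)
    (AL BL : Finset (Finset ℕ))
    (hAL : AL ⊆ (Finset.Icc 1 n).powersetCard k1)
    (hBL : BL ⊆ (Finset.Icc 1 n).powersetCard k2)
    (hALcard : AL.card = A.card) (hBLcard : BL.card = B.card)
    (hALinit : ∀ X ∈ AL, ∀ Y ∈ (Finset.Icc 1 n).powersetCard k1, lexLt Y X → Y ∈ AL)
    (hBLinit : ∀ X ∈ BL, ∀ Y ∈ (Finset.Icc 1 n).powersetCard k2, lexLt Y X → Y ∈ BL) :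
    ∀ X ∈ AL, ∀ Y ∈ BL, (X ∩ Y).Nonempty := by
  intro X0 hX0 Y0 hY0
  by_contra hcon
  -- basic nonemptiness
  have hAne : A.Nonempty := by
    rw [← Finset.card_pos, ← hALcard, Finset.card_pos]; exact ⟨X0, hX0⟩
  have hBne : B.Nonempty := by
    rw [← Finset.card_pos, ← hBLcard, Finset.card_pos]; exact ⟨Y0, hY0⟩
  obtain ⟨Xa, hXa⟩ := hAne
  obtain ⟨Yb, hYb⟩ := hBne
  obtain ⟨hXas, hXac⟩ := Finset.mem_powersetCard.mp (hA hXa)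
  obtain ⟨hYbs, hYbc⟩ := Finset.mem_powersetCard.mp (hB hYb)
  obtain ⟨hX0s, hX0c⟩ := Finset.mem_powersetCard.mp (hAL hX0)
  obtain ⟨hY0s, hY0c⟩ := Finset.mem_powersetCard.mp (hBL hY0)
  have hk1 : 1 ≤ k1 := by
    by_contra hc
    have : Xa = ∅ := Finset.card_eq_zero.mp (by omega)
    obtain ⟨z, hz⟩ := hcross Xa hXa Yb hYb
    simp [this] at hz
  have hk2 : 1 ≤ k2 := by
    by_contra hc
    have : Yb = ∅ := Finset.card_eq_zero.mp (by omega)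
    obtain ⟨z, hz⟩ := hcross Xa hXa Yb hYb
    simp [this] at hz
  have hdisj : Disjoint X0 Y0 := by
    rw [Finset.disjoint_iff_inter_eq_empty, ← Finset.not_nonempty_iff_eq_empty]
    exact hcon
  have hk12 : k1 + k2 ≤ n := by
    have h1 : (X0 ∪ Y0).card = k1 + k2 := by
      rw [Finset.card_union_of_disjoint hdisj, hX0c, hY0c]
    have h2 : X0 ∪ Y0 ⊆ Finset.Icc 1 n := Finset.union_subset hX0s hY0s
    have := Finset.card_le_card h2
    simp only [Nat.card_Icc] at this
    omega
  have hn : 0 < n := by omega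
  -- transfer to Fin n
  set f := Fm hn with hf
  set t := n - k2 - k1 with ht
  -- image families
  set 𝒜 := A.image f with h𝒜
  set 𝒜L := AL.image f with h𝒜L
  set ℬc := B.image (fun Y => (f Y)ᶜ) with hℬc
  set ℬLc := BL.image (fun Y => (f Y)ᶜ) with hℬLc
  -- cards
  have hinjA : ∀ (C : Finset (Finset ℕ)), C ⊆ (Finset.Icc 1 n).powersetCard k1 →
      (C.image f).card = C.card := by
    intro C hC
    apply Finset.card_image_of_injOn
    intro S hS T hT hST
    exact Fm_inj hn (Finset.mem_powersetCard.mp (hC hS)).1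
      (Finset.mem_powersetCard.mp (hC hT)).1 hST
  have hinjBc : ∀ (C : Finset (Finset ℕ)), C ⊆ (Finset.Icc 1 n).powersetCard k2 →
      (C.image (fun Y => (f Y)ᶜ)).card = C.card := by
    intro C hC
    apply Finset.card_image_of_injOn
    intro S hS T hT hST
    have : f S = f T := by
      have := congrArg compl hST
      simpa using this
    exact Fm_inj hn (Finset.mem_powersetCard.mp (hC hS)).1
      (Finset.mem_powersetCard.mp (hC hT)).1 this
  have h𝒜card : 𝒜.card = A.card := hinjA A hA
  have h𝒜Lcard : 𝒜L.card = A.card := by rw [h𝒜L, hinjA AL hAL, hALcard]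
  have hℬccard : ℬc.card = B.card := hinjBc B hB
  have hℬLccard : ℬLc.card = B.card := by rw [hℬLc, hinjBc BL hBL, hBLcard]
  -- sizes
  have hℬcSized : (ℬc : Set (Finset (Fin n))).Sized (n - k2) := by
    intro Z hZ
    simp only [hℬc, Finset.coe_image, Set.mem_image, Finset.mem_coe] at hZ
    obtain ⟨Y, hY, rfl⟩ := hZ
    rw [Finset.card_compl, Fm_card hn (Finset.mem_powersetCard.mp (hB hY)).1,
      (Finset.mem_powersetCard.mp (hB hY)).2]
    simp
  have hℬLcSized : (ℬLc : Set (Finset (Fin n))).Sized (n - k2) := by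
    intro Z hZ
    simp only [hℬLc, Finset.coe_image, Set.mem_image, Finset.mem_coe] at hZ
    obtain ⟨Y, hY, rfl⟩ := hZ
    rw [Finset.card_compl, Fm_card hn (Finset.mem_powersetCard.mp (hBL hY)).1,
      (Finset.mem_powersetCard.mp (hBL hY)).2]
    simp
  -- ℬLc is an initial segment of colex
  have hℬLcInit : Finset.Colex.IsInitSeg ℬLc (n - k2) := by
    refine ⟨hℬLcSized, ?_⟩
    intro s u hs ⟨hus, huc⟩
    simp only [hℬLc, Finset.mem_image] at hs
    obtain ⟨Y, hY, rfl⟩ := hs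
    -- preimage of uᶜ
    set Y' := Pm hn uᶜ with hY'
    have hY'sub : Y' ⊆ Finset.Icc 1 n := Pm_subset hn _
    have hY'card : Y'.card = k2 := by
      rw [hY', Pm_card hn, Finset.card_compl, huc, Fintype.card_fin]
      omega
    have hY'mem : Y' ∈ (Finset.Icc 1 n).powersetCard k2 :=
      Finset.mem_powersetCard.mpr ⟨hY'sub, hY'card⟩
    have hFY' : f Y' = uᶜ := Fm_Pm hn _
    -- colex: from u < (f Y)ᶜ get (f Y) = ((f Y)ᶜ)ᶜ and uᶜ relation
    have hcolex : toColex (f Y) < toColex (f Y') := by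
      rw [hFY']
      rw [← Finset.Colex.toColex_sdiff_lt_toColex_sdiff']
      have e1 : f Y \ uᶜ = u \ (f Y)ᶜ := by
        ext a; simp only [Finset.mem_sdiff, Finset.mem_compl, not_not]; tauto
      have e2 : uᶜ \ f Y = (f Y)ᶜ \ u := by
        ext a; simp only [Finset.mem_sdiff, Finset.mem_compl]; tauto
      rw [e1, e2, Finset.Colex.toColex_sdiff_lt_toColex_sdiff']
      exact hus
    have hlex : lexLt Y' Y := toColex_lexLt hn hY'mem (hBL hY) hcolex
    have : Y' ∈ BL := hBLinit Y hY Y' hY'mem hlex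
    simp only [hℬLc, Finset.mem_image]
    exact ⟨Y', this, by rw [hFY', compl_compl]⟩
  -- complement of 𝒜L in all k1-sets is an initial segment
  set P1 := Finset.powersetCard k1 (Finset.univ : Finset (Fin n)) with hP1
  have h𝒜LsubP1 : 𝒜L ⊆ P1 := by
    intro s hs
    simp only [h𝒜L, Finset.mem_image] at hs
    obtain ⟨X, hX, rfl⟩ := hs
    exact Finset.mem_powersetCard.mpr ⟨Finset.subset_univ _,
      by rw [Fm_card hn (Finset.mem_powersetCard.mp (hAL hX)).1,
        (Finset.mem_powersetCard.mp (hAL hX)).2]⟩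
  have h𝒜subP1 : 𝒜 ⊆ P1 := by
    intro s hs
    simp only [h𝒜, Finset.mem_image] at hs
    obtain ⟨X, hX, rfl⟩ := hs
    exact Finset.mem_powersetCard.mpr ⟨Finset.subset_univ _,
      by rw [Fm_card hn (Finset.mem_powersetCard.mp (hA hX)).1,
        (Finset.mem_powersetCard.mp (hA hX)).2]⟩
  set comp := P1 \ 𝒜L with hcomp
  have hcompInit : Finset.Colex.IsInitSeg comp k1 := by
    constructor
    · intro s hs
      rw [hcomp] at hs
      exact (Finset.mem_powersetCard.mp (Finset.mem_sdiff.mp hs).1).2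
    · intro s u hs ⟨hus, huc⟩
      rw [hcomp, Finset.mem_sdiff] at hs ⊢
      refine ⟨Finset.mem_powersetCard.mpr ⟨Finset.subset_univ _, huc⟩, ?_⟩
      intro huAL
      simp only [h𝒜L, Finset.mem_image] at huAL
      obtain ⟨X, hX, rfl⟩ := huAL
      set X' := Pm hn s with hX'
      have hX'mem : X' ∈ (Finset.Icc 1 n).powersetCard k1 :=
        Finset.mem_powersetCard.mpr ⟨Pm_subset hn _, by
          rw [hX', Pm_card hn]
          exact (Finset.mem_powersetCard.mp hs.1).2⟩
      have hFX' : f X' = s := Fm_Pm hn _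
      have hlex : lexLt X' X := toColex_lexLt hn hX'mem (hAL hX) (by show toColex (f X) < toColex (f X'); rw [hFX']; exact hus)
      have : X' ∈ AL := hALinit X hX X' hX'mem hlex
      exact hs.2 (by simp only [h𝒜L, Finset.mem_image]; exact ⟨X', this, hFX'⟩)
  -- disjointness of 𝒜 and iterated shadow of ℬc
  have hshadow_disj : Disjoint 𝒜 (Finset.shadow^[t] ℬc) := by
    rw [Finset.disjoint_left]
    intro s hs hsh
    rw [Finset.mem_shadow_iterate_iff_exists_sdiff] at hsh
    obtain ⟨Z, hZ, hsZ, _⟩ := hsh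
    simp only [hℬc, Finset.mem_image] at hZ
    obtain ⟨Y, hY, rfl⟩ := hZ
    simp only [h𝒜, Finset.mem_image] at hs
    obtain ⟨X, hX, rfl⟩ := hs
    obtain ⟨z, hz⟩ := hcross X hX Y hY
    rw [Finset.mem_inter] at hz
    have h1 : fmap hn z ∈ f X := mem_Fm.mpr ⟨z, hz.1, rfl⟩
    have h2 : fmap hn z ∈ f Y := mem_Fm.mpr ⟨z, hz.2, rfl⟩
    exact (Finset.mem_compl.mp (hsZ h1)) h2
  -- shadows are in P1
  have hshadowBc_sub : Finset.shadow^[t] ℬc ⊆ P1 := by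
    intro s hs
    have := hℬcSized.shadow_iterate (k := t) (Finset.mem_coe.mpr hs)
    exact Finset.mem_powersetCard.mpr ⟨Finset.subset_univ _, by rw [this]; omega⟩
  have hshadowBLc_sub : Finset.shadow^[t] ℬLc ⊆ P1 := by
    intro s hs
    have := hℬLcSized.shadow_iterate (k := t) (Finset.mem_coe.mpr hs)
    exact Finset.mem_powersetCard.mpr ⟨Finset.subset_univ _, by rw [this]; omega⟩
  -- counting
  have hcount : 𝒜.card + (Finset.shadow^[t] ℬc).card ≤ P1.card := by
    rw [← Finset.card_union_of_disjoint hshadow_disj]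
    exact Finset.card_le_card (Finset.union_subset h𝒜subP1 hshadowBc_sub)
  -- Kruskal-Katona
  have hKK : (Finset.shadow^[t] ℬLc).card ≤ (Finset.shadow^[t] ℬc).card := by
    exact Finset.iterated_kk (k := t) hℬcSized (le_of_eq (hℬLccard.trans hℬccard.symm)) hℬLcInit
  -- iterated shadow of initial segment is initial segment
  have hshadowInit : ∀ (j : ℕ) (𝒞 : Finset (Finset (Fin n))) (r : ℕ),
      Finset.Colex.IsInitSeg 𝒞 r → Finset.Colex.IsInitSeg (Finset.shadow^[j] 𝒞) (r - j) := by
    intro j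
    induction j with
    | zero => intro 𝒞 r h; simpa using h
    | succ j ih =>
      intro 𝒞 r h
      rw [Function.iterate_succ_apply']
      have h2 := (ih 𝒞 r h).shadow
      have e : r - j - 1 = r - (j + 1) := by omega
      rw [e] at h2
      exact h2
  have hDInit : Finset.Colex.IsInitSeg (Finset.shadow^[t] ℬLc) k1 := by
    have e : n - k2 - t = k1 := by omega
    have := hshadowInit t ℬLc (n - k2) hℬLcInit
    rwa [e] at this
  -- F X0 is in the iterated shadow of ℬLc
  have hX0mem : f X0 ∈ Finset.shadow^[t] ℬLc := by
    rw [Finset.mem_shadow_iterate_iff_exists_sdiff]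
    refine ⟨(f Y0)ᶜ, by simp only [hℬLc, Finset.mem_image]; exact ⟨Y0, hY0, rfl⟩, ?_, ?_⟩
    · intro a ha
      obtain ⟨x, hx, rfl⟩ := mem_Fm.mp ha
      rw [Finset.mem_compl]
      intro hc
      obtain ⟨y, hy, hxy⟩ := mem_Fm.mp hc
      rw [fmap_injOn hn (hY0s hy) (hX0s hx) hxy] at hy
      exact (Finset.disjoint_left.mp hdisj hx) hy
    · have hsub : f X0 ⊆ (f Y0)ᶜ := by
        intro a ha
        obtain ⟨x, hx, rfl⟩ := mem_Fm.mp ha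
        rw [Finset.mem_compl]
        intro hc
        obtain ⟨y, hy, hxy⟩ := mem_Fm.mp hc
        rw [fmap_injOn hn (hY0s hy) (hX0s hx) hxy] at hy
        exact (Finset.disjoint_left.mp hdisj hx) hy
      have hcs : #((f Y0)ᶜ \ f X0) = Fintype.card (Fin n) - k2 - k1 := by
        rw [Finset.card_sdiff_of_subset hsub, Finset.card_compl, Fm_card hn hY0s, hY0c,
          Fm_card hn hX0s, hX0c]
      have hfc : Fintype.card (Fin n) = n := Fintype.card_fin n
      omega
  have hX0notcomp : f X0 ∉ comp := by
    rw [hcomp, Finset.mem_sdiff]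
    push_neg
    intro _
    simp only [h𝒜L, Finset.mem_image]
    exact ⟨X0, hX0, rfl⟩
  -- final contradiction via IsInitSeg.total
  have hcompcard : comp.card = P1.card - 𝒜L.card := Finset.card_sdiff_of_subset h𝒜LsubP1
  rcases hDInit.total hcompInit with hsub | hsub
  · exact hX0notcomp (hsub hX0mem)
  · have h1 : comp.card ≤ (Finset.shadow^[t] ℬLc).card := Finset.card_le_card hsub
    have h2 : (Finset.shadow^[t] ℬLc).card ≤ P1.card - 𝒜L.card := by
      have := hcount
      rw [h𝒜card, ← h𝒜Lcard] at this
      omega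
    have heq : Finset.shadow^[t] ℬLc = comp :=
      (Finset.eq_of_subset_of_card_le hsub (by omega)).symm
    exact hX0notcomp (heq ▸ hX0mem)
end

section
/- Let R_1, R_2 be nonempty subsets of [n] with max(R_1) = k_1 and max(R_2) = k_2, and suppose n ≥ k_1 + k_2. Let F_1 ⊆ binom([n],R_1) and F_2 ⊆ binom([n],R_2) be monotone, left-compressed, non-empty cross-intersecting families with generating families G_1 and G_2 respectively. Then E_1 ∩ E_2 ≠ ∅ for all E_1 ∈ G_1 and E_2 ∈ G_2. -/
open Finset

/-- binom([n],R): all subsets of [n] = {1,...,n} whose cardinality lies in R. -/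
def famR (n : ℕ) (R : Finset ℕ) : Finset (Finset ℕ) :=
  (Finset.Icc 1 n).powerset.filter (fun A => A.card ∈ R)

/-- The up-set ⟨E⟩_R of E inside binom([n],R). -/
def upSet (n : ℕ) (R : Finset ℕ) (E : Finset ℕ) : Finset (Finset ℕ) :=
  (famR n R).filter (fun A => E ⊆ A)

/-- F ⊆ binom([n],R) is monotone. -/
def MonotoneFam (n : ℕ) (R : Finset ℕ) (F : Finset (Finset ℕ)) : Prop :=
  ∀ A ∈ F, ∀ B, A ⊆ B → B ⊆ Finset.Icc 1 n → B.card ∈ R → B ∈ F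

/-- The shift s_{i,j} applied to a member A of F. -/
def shiftSet (F : Finset (Finset ℕ)) (i j : ℕ) (A : Finset ℕ) : Finset ℕ :=
  if j ∈ A ∧ i ∉ A ∧ insert i (A.erase j) ∉ F then insert i (A.erase j) else A

/-- The shift s_{i,j} applied to the family F. -/
def shiftFam (i j : ℕ) (F : Finset (Finset ℕ)) : Finset (Finset ℕ) :=
  F.image (shiftSet F i j)

/-- F is left-compressed: s_{i,j}(F) = F for all 1 ≤ i < j ≤ n. -/
def LeftCompressed (n : ℕ) (F : Finset (Finset ℕ)) : Prop :=
  ∀ i j, 1 ≤ i → i < j → j ≤ n → shiftFam i j F = F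

/-- E is a generating set of the monotone family F ⊆ binom([n],R):
E ⊆ [n], |E| ≤ max(R), ⟨E⟩_R ⊆ F, and E is minimal under inclusion with this property. -/
def IsGenSet (n : ℕ) (R : Finset ℕ) (F : Finset (Finset ℕ)) (E : Finset ℕ) : Prop :=
  E ⊆ Finset.Icc 1 n ∧ E.card ≤ R.sup id ∧ upSet n R E ⊆ F ∧
    ∀ E', E' ⊂ E → ¬ upSet n R E' ⊆ F

theorem stmt7 (n k1 k2 : ℕ) (R1 R2 : Finset ℕ)
    (hR1ne : R1.Nonempty) (hR2ne : R2.Nonempty)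
    (hR1sub : R1 ⊆ Finset.Icc 1 n) (hR2sub : R2 ⊆ Finset.Icc 1 n)
    (hk1 : IsGreatest (R1 : Set ℕ) k1) (hk2 : IsGreatest (R2 : Set ℕ) k2)
    (hn : k1 + k2 ≤ n)
    (F1 F2 : Finset (Finset ℕ))
    (hF1 : F1 ⊆ famR n R1) (hF2 : F2 ⊆ famR n R2)
    (hmono1 : MonotoneFam n R1 F1) (hmono2 : MonotoneFam n R2 F2)
    (hlc1 : LeftCompressed n F1) (hlc2 : LeftCompressed n F2)
    (hne1 : F1.Nonempty) (hne2 : F2.Nonempty)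
    (hcross : ∀ A ∈ F1, ∀ B ∈ F2, (A ∩ B).Nonempty)
    (E1 E2 : Finset ℕ)
    (hE1 : IsGenSet n R1 F1 E1) (hE2 : IsGenSet n R2 F2 E2) :
    (E1 ∩ E2).Nonempty := by
  by_contra hcon
  have hdisj : Disjoint E1 E2 := by
    rw [Finset.not_nonempty_iff_eq_empty] at hcon
    exact Finset.disjoint_iff_inter_eq_empty.mpr hcon
  have hsup1 : R1.sup id = k1 :=
    le_antisymm (Finset.sup_le fun b hb => hk1.2 hb) (Finset.le_sup (f := id) hk1.1)
  have hsup2 : R2.sup id = k2 :=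
    le_antisymm (Finset.sup_le fun b hb => hk2.2 hb) (Finset.le_sup (f := id) hk2.1)
  have hcard1 : E1.card ≤ k1 := hsup1 ▸ hE1.2.1
  have hcard2 : E2.card ≤ k2 := hsup2 ▸ hE2.2.1
  have hE2n : E2.card ≤ n := le_trans hcard2 (le_trans (Nat.le_add_left _ _) hn)
  have hIcard : (Finset.Icc 1 n).card = n := by simp [Nat.card_Icc]
  -- construct A
  obtain ⟨A, hE1A, hAsub, hAcard⟩ :
      ∃ A, E1 ⊆ A ∧ A ⊆ (Finset.Icc 1 n) \ E2 ∧ A.card = k1 := by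
    apply Finset.exists_subsuperset_card_eq
    · exact Finset.subset_sdiff.mpr ⟨hE1.1, hdisj⟩
    · exact hcard1
    · rw [Finset.card_sdiff_of_subset hE2.1, hIcard]
      omega
  have hAIcc : A ⊆ Finset.Icc 1 n := hAsub.trans (Finset.sdiff_subset)
  have hAE2 : Disjoint A E2 := (Finset.subset_sdiff.mp hAsub).2
  obtain ⟨B, hE2B, hBsub, hBcard⟩ :
      ∃ B, E2 ⊆ B ∧ B ⊆ (Finset.Icc 1 n) \ A ∧ B.card = k2 := by
    apply Finset.exists_subsuperset_card_eq
    · exact Finset.subset_sdiff.mpr ⟨hE2.1, hAE2.symm⟩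
    · exact hcard2
    · rw [Finset.card_sdiff_of_subset hAIcc, hIcard, hAcard]
      omega
  have hBIcc : B ⊆ Finset.Icc 1 n := hBsub.trans (Finset.sdiff_subset)
  have hA : A ∈ F1 := by
    apply hE1.2.2.1
    simp only [upSet, famR, Finset.mem_filter, Finset.mem_powerset]
    exact ⟨⟨hAIcc, by rw [hAcard]; exact hk1.1⟩, hE1A⟩
  have hB : B ∈ F2 := by
    apply hE2.2.2.1
    simp only [upSet, famR, Finset.mem_filter, Finset.mem_powerset]
    exact ⟨⟨hBIcc, by rw [hBcard]; exact hk2.1⟩, hE2B⟩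
  have := hcross A hA B hB
  have hABdisj : Disjoint A B := ((Finset.subset_sdiff.mp hBsub).2).symm
  rw [Finset.disjoint_iff_inter_eq_empty] at hABdisj
  rw [hABdisj] at this
  exact Finset.not_nonempty_empty this
end

section
/- Let R be a nonempty subset of [n] and let F ⊆ binom([n],R) be a monotone, left-compressed family with generating family G and extent l. For any 1 ≤ x < y ≤ l and any E ∈ G, there exists E_0 ∈ G with E_0 ⊆ τ_{x,y}(E), where τ_{x,y}(E) = (E \ {y}) ∪ {x} if y ∈ E and x ∉ E, and τ_{x,y}(E) = E otherwise. -/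
open Finset

/-- τ_{x,y}(E) = (E \ {y}) ∪ {x} if y ∈ E and x ∉ E, and E otherwise. -/
def tauShift (x y : ℕ) (E : Finset ℕ) : Finset ℕ :=
  if y ∈ E ∧ x ∉ E then insert x (E.erase y) else E

theorem stmt8 (n : ℕ) (R : Finset ℕ) (hRne : R.Nonempty) (hRsub : R ⊆ Finset.Icc 1 n)
    (F : Finset (Finset ℕ)) (hF : F ⊆ famR n R)
    (hmono : MonotoneFam n R F) (hlc : LeftCompressed n F)
    (l : ℕ) (hl : IsGreatest {x | ∃ E, IsGenSet n R F E ∧ x ∈ E} l)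
    (x y : ℕ) (hx : 1 ≤ x) (hxy : x < y) (hyl : y ≤ l)
    (E : Finset ℕ) (hE : IsGenSet n R F E) :
    ∃ E0, IsGenSet n R F E0 ∧ E0 ⊆ tauShift x y E := by
  -- l ≤ n
  obtain ⟨⟨El, hElgen, hlEl⟩, -⟩ := hl
  have hln : l ≤ n := (Finset.mem_Icc.1 (hElgen.1 hlEl)).2
  have hyn : y ≤ n := hyl.trans hln
  unfold tauShift
  by_cases hc : y ∈ E ∧ x ∉ E
  · simp only [hc, if_true]
    set T := insert x (E.erase y) with hT
    obtain ⟨hEsub, hEcard, hEup, hEmin⟩ := hE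
    -- T ⊆ Icc 1 n
    have hTsub : T ⊆ Finset.Icc 1 n := by
      intro a ha
      rcases Finset.mem_insert.1 ha with rfl | ha
      · exact Finset.mem_Icc.2 ⟨hx, le_trans (le_of_lt hxy) hyn⟩
      · exact hEsub (Finset.mem_of_mem_erase ha)
    have hTcard : T.card = E.card := by
      rw [hT, Finset.card_insert_of_notMem (fun h => hc.2 (Finset.mem_of_mem_erase h)),
        Finset.card_erase_of_mem hc.1]
      have : 1 ≤ E.card := Finset.card_pos.2 ⟨y, hc.1⟩
      omega
    -- key: upSet T ⊆ F
    have hTup : upSet n R T ⊆ F := by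
      intro A hA
      rw [upSet, Finset.mem_filter] at hA
      obtain ⟨hAfam, hTA⟩ := hA
      have hxA : x ∈ A := hTA (Finset.mem_insert_self _ _)
      have hErA : E.erase y ⊆ A := fun a ha => hTA (Finset.mem_insert_of_mem ha)
      by_cases hyA : y ∈ A
      · -- E ⊆ A
        have : E ⊆ A := by
          intro a ha
          by_cases hay : a = y
          · exact hay ▸ hyA
          · exact hErA (Finset.mem_erase.2 ⟨hay, ha⟩)
        exact hEup (Finset.mem_filter.2 ⟨hAfam, this⟩)
      · -- B = insert y (A.erase x) ∈ F, then shift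
        set B := insert y (A.erase x) with hB
        have hxyne : x ≠ y := ne_of_lt hxy
        have hAsub := (Finset.mem_filter.1 hAfam).1
        rw [Finset.mem_powerset] at hAsub
        have hBsub : B ⊆ Finset.Icc 1 n := by
          intro a ha
          rcases Finset.mem_insert.1 ha with rfl | ha
          · exact Finset.mem_Icc.2 ⟨le_trans hx (le_of_lt hxy), hyn⟩
          · exact hAsub (Finset.mem_of_mem_erase ha)
        have hyBne : y ∉ A.erase x := fun h => hyA (Finset.mem_of_mem_erase h)
        have hBcard : B.card = A.card := by
          rw [hB, Finset.card_insert_of_notMem hyBne, Finset.card_erase_of_mem hxA]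
          have : 1 ≤ A.card := Finset.card_pos.2 ⟨x, hxA⟩
          omega
        have hBfam : B ∈ famR n R := by
          rw [famR, Finset.mem_filter, Finset.mem_powerset]
          refine ⟨hBsub, ?_⟩
          rw [hBcard]
          exact (Finset.mem_filter.1 hAfam).2
        have hEB : E ⊆ B := by
          intro a ha
          by_cases hay : a = y
          · exact hay ▸ Finset.mem_insert_self _ _
          · refine Finset.mem_insert_of_mem (Finset.mem_erase.2 ⟨?_, hErA (Finset.mem_erase.2 ⟨hay, ha⟩)⟩)
            rintro rfl; exact hc.2 ha
        have hBF : B ∈ F := hEup (Finset.mem_filter.2 ⟨hBfam, hEB⟩)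
        -- shift B
        by_contra hAF
        have hxB : x ∉ B := by
          rw [hB, Finset.mem_insert]
          push_neg
          exact ⟨hxyne, fun h => (Finset.mem_erase.1 h).1 rfl⟩
        have hBey : B.erase y = A.erase x := by
          rw [hB, Finset.erase_insert hyBne]
        have heq : insert x (B.erase y) = A := by
          rw [hBey, Finset.insert_erase hxA]
        have hshift : shiftSet F x y B = A := by
          rw [shiftSet, if_pos ⟨Finset.mem_insert_self _ _, hxB, heq ▸ hAF⟩, heq]
        have : A ∈ shiftFam x y F := by
          rw [shiftFam, Finset.mem_image]
          exact ⟨B, hBF, hshift⟩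
        rw [hlc x y hx hxy hyn] at this
        exact hAF this
    -- pick minimal-card subset of T with up-set in F
    have hne : (T.powerset.filter (fun S => upSet n R S ⊆ F)).Nonempty :=
      ⟨T, Finset.mem_filter.2 ⟨Finset.mem_powerset_self _, hTup⟩⟩
    obtain ⟨E0, hE0mem, hE0min⟩ := Finset.exists_min_image _ Finset.card hne
    rw [Finset.mem_filter, Finset.mem_powerset] at hE0mem
    obtain ⟨hE0T, hE0up⟩ := hE0mem
    refine ⟨E0, ⟨hE0T.trans hTsub, ?_, hE0up, ?_⟩, hE0T⟩
    · calc E0.card ≤ T.card := Finset.card_le_card hE0T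
        _ = E.card := hTcard
        _ ≤ R.sup id := hEcard
    · intro E' hE' hE'up
      have : E' ∈ T.powerset.filter (fun S => upSet n R S ⊆ F) :=
        Finset.mem_filter.2 ⟨Finset.mem_powerset.2 ((subset_of_ssubset hE').trans hE0T), hE'up⟩
      have := hE0min E' this
      exact absurd this (not_le.2 (Finset.card_lt_card hE'))
  · simp only [hc, if_false]
    exact ⟨E, hE, Finset.Subset.refl _⟩
end

section
/- Let R be a nonempty subset of [n] and let F ⊆ binom([n],R) be a monotone, left-compressed family with generating family G. Then the sets D_R(E) for E ∈ G are pairwise disjoint and F = ⋃_{E ∈ G} D_R(E), where D_R(E) = {A ∈ binom([n],R) : A ∩ [max(E)] = E} (with the convention [max(∅)] = ∅). -/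
open Finset

/-- D_R(E) = {A ∈ binom([n],R) : A ∩ [max(E)] = E}, with [max(∅)] = ∅. -/
def DR (n : ℕ) (R : Finset ℕ) (E : Finset ℕ) : Finset (Finset ℕ) :=
  (famR n R).filter (fun A => A ∩ Finset.Icc 1 (E.sup id) = E)

lemma mem_famR {n : ℕ} {R : Finset ℕ} {A : Finset ℕ} :
    A ∈ famR n R ↔ A ⊆ Finset.Icc 1 n ∧ A.card ∈ R := by
  simp [famR]

lemma mem_upSet {n : ℕ} {R E A : Finset ℕ} :
    A ∈ upSet n R E ↔ A ∈ famR n R ∧ E ⊆ A := by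
  simp [upSet, famR, and_assoc]

lemma shift_mem {n : ℕ} {F : Finset (Finset ℕ)} (hlc : LeftCompressed n F)
    {A : Finset ℕ} {i j : ℕ} (hA : A ∈ F) (hj : j ∈ A) (hi : i ∉ A)
    (h1 : 1 ≤ i) (hij : i < j) (hjn : j ≤ n) : insert i (A.erase j) ∈ F := by
  by_contra h
  have hs : shiftSet F i j A = insert i (A.erase j) := by
    simp [shiftSet, hj, hi, h]
  have hmem : insert i (A.erase j) ∈ shiftFam i j F :=
    mem_image.2 ⟨A, hA, hs⟩
  rw [hlc i j h1 hij hjn] at hmem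
  exact h hmem

lemma upSet_shift {n : ℕ} {R : Finset ℕ} {F : Finset (Finset ℕ)}
    (hlc : LeftCompressed n F)
    {E' : Finset ℕ} {e m : ℕ} (hE' : upSet n R E' ⊆ F)
    (hm : m ∈ E') (he : e ∉ E') (h1 : 1 ≤ e) (hem : e < m) (hmn : m ≤ n) :
    upSet n R (insert e (E'.erase m)) ⊆ F := by
  intro B hB
  rw [mem_upSet] at hB
  obtain ⟨hBfam, hBsub⟩ := hB
  have heB : e ∈ B := hBsub (mem_insert_self _ _)
  by_cases hmB : m ∈ B
  · apply hE'
    rw [mem_upSet]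
    refine ⟨hBfam, fun x hx => ?_⟩
    by_cases hxm : x = m
    · subst hxm; exact hmB
    · exact hBsub (mem_insert_of_mem (mem_erase.2 ⟨hxm, hx⟩))
  · obtain ⟨hBicc, hBcard⟩ := mem_famR.1 hBfam
    have hmBe : m ∉ B.erase e := fun h => hmB (mem_of_mem_erase h)
    have hB'icc : insert m (B.erase e) ⊆ Finset.Icc 1 n := by
      intro x hx
      rcases mem_insert.1 hx with rfl | hx
      · exact mem_Icc.2 ⟨by omega, hmn⟩
      · exact hBicc (mem_of_mem_erase hx)
    have hB'card : (insert m (B.erase e)).card = B.card := by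
      rw [card_insert_of_notMem hmBe, card_erase_of_mem heB]
      have : 0 < B.card := card_pos.2 ⟨e, heB⟩
      omega
    have hB'fam : insert m (B.erase e) ∈ famR n R :=
      mem_famR.2 ⟨hB'icc, by rw [hB'card]; exact hBcard⟩
    have hE'B' : E' ⊆ insert m (B.erase e) := by
      intro x hx
      by_cases hxm : x = m
      · subst hxm; exact mem_insert_self _ _
      · have hxB : x ∈ B := hBsub (mem_insert_of_mem (mem_erase.2 ⟨hxm, hx⟩))
        have hxe : x ≠ e := fun h => he (h ▸ hx)
        exact mem_insert_of_mem (mem_erase.2 ⟨hxe, hxB⟩)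
    have hB'F : insert m (B.erase e) ∈ F := hE' (mem_upSet.2 ⟨hB'fam, hE'B'⟩)
    have heB' : e ∉ insert m (B.erase e) := by
      simp only [mem_insert, mem_erase]
      push_neg
      exact ⟨by omega, fun h _ => h rfl⟩
    have := shift_mem hlc hB'F (mem_insert_self m _) heB' h1 hem hmn
    have heq : insert e ((insert m (B.erase e)).erase m) = B := by
      rw [erase_insert hmBe, insert_erase heB]
    rwa [heq] at this

lemma disj_aux {n : ℕ} {R : Finset ℕ} {F : Finset (Finset ℕ)} {E1 E2 : Finset ℕ}
    (h1 : IsGenSet n R F E1) (h2 : IsGenSet n R F E2) (hne : E1 ≠ E2)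
    (hs : E1.sup id ≤ E2.sup id) {A : Finset ℕ}
    (hA1 : A ∈ DR n R E1) (hA2 : A ∈ DR n R E2) : False := by
  simp only [DR, mem_filter] at hA1 hA2
  have hsub : E1 ⊆ E2 := by
    intro x hx
    rw [← hA1.2] at hx
    obtain ⟨hxA, hxI⟩ := mem_inter.1 hx
    rw [mem_Icc] at hxI
    rw [← hA2.2]
    exact mem_inter.2 ⟨hxA, mem_Icc.2 ⟨hxI.1, le_trans hxI.2 hs⟩⟩
  exact h2.2.2.2 E1 (ssubset_of_subset_of_ne hsub hne) h1.2.2.1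

theorem stmt10 (n : ℕ) (R : Finset ℕ) (hRne : R.Nonempty) (hRsub : R ⊆ Finset.Icc 1 n)
    (F : Finset (Finset ℕ)) (hF : F ⊆ famR n R)
    (hmono : MonotoneFam n R F) (hlc : LeftCompressed n F) :
    (∀ E1 E2, IsGenSet n R F E1 → IsGenSet n R F E2 → E1 ≠ E2 →
      Disjoint (DR n R E1) (DR n R E2)) ∧
    (∀ A, A ∈ F ↔ ∃ E, IsGenSet n R F E ∧ A ∈ DR n R E) := by
  constructor
  · intro E1 E2 h1 h2 hne
    rw [disjoint_left]
    intro A hA1 hA2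
    rcases le_total (E1.sup id) (E2.sup id) with hs | hs
    · exact disj_aux h1 h2 hne hs hA1 hA2
    · exact disj_aux h2 h1 hne.symm hs hA2 hA1
  · intro A
    constructor
    · intro hA
      have hAfam := hF hA
      obtain ⟨hAsub, hAcard⟩ := mem_famR.1 hAfam
      have hPn : upSet n R (A ∩ Finset.Icc 1 n) ⊆ F := by
        rw [inter_eq_left.2 hAsub]
        intro B hB
        obtain ⟨hBfam, hAB⟩ := mem_upSet.1 hB
        obtain ⟨hB1, hB2⟩ := mem_famR.1 hBfam
        exact hmono A hA B hAB hB1 hB2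
      have hex : ∃ m, upSet n R (A ∩ Finset.Icc 1 m) ⊆ F := ⟨n, hPn⟩
      set m := Nat.find hex with hmdef
      have hm : upSet n R (A ∩ Finset.Icc 1 m) ⊆ F := Nat.find_spec hex
      rcases Nat.eq_zero_or_pos m with hm0 | hm1
      · refine ⟨∅, ⟨empty_subset _, by simp, ?_, fun E' hE' => absurd hE' (by simp)⟩, ?_⟩
        · have : A ∩ Finset.Icc 1 m = ∅ := by rw [hm0]; simp
          rwa [this] at hm
        · simp only [DR, mem_filter]
          exact ⟨hAfam, by simp⟩
      · have hmA : m ∈ A := by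
          by_contra h'
          apply Nat.find_min hex (show m - 1 < m by omega)
          have heq : A ∩ Finset.Icc 1 (m - 1) = A ∩ Finset.Icc 1 m := by
            ext x
            simp only [mem_inter, mem_Icc]
            constructor
            · rintro ⟨hx, h1x, h2x⟩; exact ⟨hx, h1x, by omega⟩
            · rintro ⟨hx, h1x, h2x⟩
              refine ⟨hx, h1x, ?_⟩
              have : x ≠ m := fun h => h' (h ▸ hx)
              omega
          rw [heq]
          exact hm
        have hmn : m ≤ n := (mem_Icc.1 (hAsub hmA)).2
        set E := A ∩ Finset.Icc 1 m with hEdef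
        have hmE : m ∈ E := mem_inter.2 ⟨hmA, mem_Icc.2 ⟨hm1, le_refl m⟩⟩
        have hEsubA : E ⊆ A := inter_subset_left
        have hEm : ∀ x ∈ E, 1 ≤ x ∧ x ≤ m := fun x hx =>
          mem_Icc.1 (mem_inter.1 hx).2
        have hsupE : E.sup id = m :=
          le_antisymm (Finset.sup_le fun x hx => (hEm x hx).2) (le_sup (f := id) hmE)
        refine ⟨E, ⟨hEsubA.trans hAsub, (card_le_card hEsubA).trans (le_sup (f := id) hAcard),
          hm, ?_⟩, ?_⟩
        · intro E' hE' hE'up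
          obtain ⟨hE'sub, hne⟩ := hE'
          -- produce D ⊆ A ∩ Icc 1 (m-1) with upSet D ⊆ F
          have key : ∃ D : Finset ℕ, D ⊆ A ∩ Finset.Icc 1 (m - 1) ∧ upSet n R D ⊆ F := by
            by_cases hmE' : m ∈ E'
            · obtain ⟨e, heE, heE'⟩ := exists_of_ssubset ⟨hE'sub, hne⟩
              have hem : e < m := by
                have := hEm e heE
                have : e ≠ m := fun h => heE' (h ▸ hmE')
                omega
              have h1e : 1 ≤ e := (hEm e heE).1
              refine ⟨insert e (E'.erase m), ?_, upSet_shift hlc hE'up hmE' heE' h1e hem hmn⟩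
              intro x hx
              rcases mem_insert.1 hx with rfl | hx
              · exact mem_inter.2 ⟨hEsubA heE, mem_Icc.2 ⟨h1e, by omega⟩⟩
              · obtain ⟨hxm, hxE'⟩ := mem_erase.1 hx
                have hxE := hE'sub hxE'
                have := hEm x hxE
                exact mem_inter.2 ⟨hEsubA hxE, mem_Icc.2 ⟨this.1, by omega⟩⟩
            · refine ⟨E', ?_, hE'up⟩
              intro x hx
              have hxE := hE'sub hx
              have := hEm x hxE
              have hxm : x ≠ m := fun h => hmE' (h ▸ hx)
              exact mem_inter.2 ⟨hEsubA hxE, mem_Icc.2 ⟨this.1, by omega⟩⟩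
          obtain ⟨D, hDsub, hDup⟩ := key
          apply Nat.find_min hex (show m - 1 < m by omega)
          intro B hB
          obtain ⟨hBfam, hDB⟩ := mem_upSet.1 hB
          exact hDup (mem_upSet.2 ⟨hBfam, hDsub.trans hDB⟩)
        · simp only [DR, mem_filter]
          exact ⟨hAfam, by rw [hsupE]⟩
    · rintro ⟨E, hE, hA⟩
      simp only [DR, mem_filter] at hA
      obtain ⟨hAfam, hAeq⟩ := hA
      have hEA : E ⊆ A := by rw [← hAeq]; exact inter_subset_left
      exact hE.2.2.1 (mem_upSet.2 ⟨hAfam, hEA⟩)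
end

section
/- Let m ≥ 2 and n be positive integers, and for each i ∈ [m] let R_i be a nonempty subset of [n]. Fix an index i_0 with max(R_{i_0}) = max_i max(R_i), set k_1 = max(R_{i_0}) and k_2 = max_{i ≠ i_0} max(R_i). Fix γ ∈ [m] and let k = min{x : x ∈ R_j for some j ∈ [m]\{γ}}. For 1 ≤ l ≤ k define F_γ(l) = Σ_{a ∈ R_γ} ( C(n,a) − C(n−l, a) ) + Σ_{α ∈ [m]\{γ}} Σ_{b ∈ R_α} C(n−l, b−l). If n > k_1 + k_2, then F_γ(l) ≤ max{ F_γ(1), F_γ(k) } for every l with 1 ≤ l ≤ k. -/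
open Finset

/-- F_γ(l) = |M1(n,R_γ,[l])| + Σ_{α≠γ} |M2(n,R_α,[l])|, written via binomial coefficients. -/
def Fval (m n : ℕ) (R : Fin m → Finset ℕ) (γ : Fin m) (l : ℕ) : ℕ :=
  (∑ a ∈ R γ, (Nat.choose n a - Nat.choose (n - l) a)) +
    ∑ α ∈ Finset.univ.erase γ, ∑ b ∈ R α, Nat.choose (n - l) (b - l)

/-- Positive part of the increment. -/
def Pf (n : ℕ) (Rγ : Finset ℕ) (t : ℕ) : ℕ := ∑ a ∈ Rγ, Nat.choose (n - t - 1) (a - 1)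

/-- Negative part of the increment. -/
def Nfn (m n : ℕ) (R : Fin m → Finset ℕ) (γ : Fin m) (t : ℕ) : ℕ :=
  ∑ α ∈ Finset.univ.erase γ, ∑ b ∈ R α, Nat.choose (n - t - 1) (b - t)

lemma step_eq (m n : ℕ) (R : Fin m → Finset ℕ) (γ : Fin m) (k s sγ : ℕ)
    (hmema : ∀ a ∈ R γ, 1 ≤ a ∧ a ≤ sγ)
    (hmemb : ∀ α ∈ Finset.univ.erase γ, ∀ b ∈ R α, k ≤ b ∧ b ≤ s)
    (hsn : sγ + s < n) (hsγ : 1 ≤ sγ) (hks : k ≤ s)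
    (t : ℕ) (ht : t + 1 ≤ k) :
    Fval m n R γ (t+1) + Nfn m n R γ t = Fval m n R γ t + Pf n (R γ) t := by
  have h1 : ∑ a ∈ R γ, (Nat.choose n a - Nat.choose (n - (t+1)) a)
      = ∑ a ∈ R γ, ((Nat.choose n a - Nat.choose (n - t) a) + Nat.choose (n - t - 1) (a - 1)) := by
    refine Finset.sum_congr rfl fun a ha => ?_
    obtain ⟨ha1, ha2⟩ := hmema a ha
    have pas : Nat.choose ((n-t-1)+1) ((a-1)+1)
        = Nat.choose (n-t-1) (a-1) + Nat.choose (n-t-1) ((a-1)+1) := Nat.choose_succ_succ _ _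
    have e1 : (n-t-1)+1 = n - t := by omega
    have e2 : (a-1)+1 = a := by omega
    rw [e1, e2] at pas
    have mono : Nat.choose (n-t) a ≤ Nat.choose n a := Nat.choose_le_choose a (by omega)
    have e3 : n - (t+1) = n - t - 1 := by omega
    rw [e3]
    omega
  have h2 : (∑ α ∈ Finset.univ.erase γ, ∑ b ∈ R α, Nat.choose (n - (t+1)) (b - (t+1)))
      + Nfn m n R γ t
      = ∑ α ∈ Finset.univ.erase γ, ∑ b ∈ R α, Nat.choose (n - t) (b - t) := by
    unfold Nfn
    rw [← Finset.sum_add_distrib]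
    refine Finset.sum_congr rfl fun α hα => ?_
    rw [← Finset.sum_add_distrib]
    refine Finset.sum_congr rfl fun b hb => ?_
    obtain ⟨hb1, hb2⟩ := hmemb α hα b hb
    have pas : Nat.choose ((n-t-1)+1) ((b-t-1)+1)
        = Nat.choose (n-t-1) (b-t-1) + Nat.choose (n-t-1) ((b-t-1)+1) := Nat.choose_succ_succ _ _
    have e1 : (n-t-1)+1 = n - t := by omega
    have e2 : (b-t-1)+1 = b - t := by omega
    rw [e1, e2] at pas
    have e3 : n - (t+1) = n - t - 1 := by omega
    have e4 : b - (t+1) = b - t - 1 := by omega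
    rw [e3, e4]
    omega
  unfold Fval Pf
  rw [h1, Finset.sum_add_distrib]
  omega

lemma sign_step (m n : ℕ) (R : Fin m → Finset ℕ) (γ : Fin m) (k s sγ : ℕ)
    (hmema : ∀ a ∈ R γ, 1 ≤ a ∧ a ≤ sγ)
    (hmemb : ∀ α ∈ Finset.univ.erase γ, ∀ b ∈ R α, k ≤ b ∧ b ≤ s)
    (hsn : sγ + s < n) (hsγ : 1 ≤ sγ) (hks : k ≤ s)
    (t : ℕ) (ht : t + 2 ≤ k)
    (hNP : Nfn m n R γ t ≤ Pf n (R γ) t) :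
    Nfn m n R γ (t+1) ≤ Pf n (R γ) (t+1) := by
  have hApos : 0 < n - t - 1 := by omega
  -- (s - t + 1) * Pf t ≤ (n - t - 1) * Pf (t+1)
  have h1 : (s - t + 1) * Pf n (R γ) t ≤ (n - t - 1) * Pf n (R γ) (t+1) := by
    unfold Pf
    rw [Finset.mul_sum, Finset.mul_sum]
    refine Finset.sum_le_sum fun a ha => ?_
    obtain ⟨ha1, ha2⟩ := hmema a ha
    have id1 : Nat.succ (n-t-2) * Nat.choose (n-t-2) (a-1)
        = Nat.choose ((n-t-2)+1) ((a-1)+1) * ((a-1)+1) := Nat.add_one_mul_choose_eq _ _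
    have id2 : Nat.choose (n-t-1) ((a-1)+1) * ((a-1)+1)
        = Nat.choose (n-t-1) (a-1) * ((n-t-1) - (a-1)) := Nat.choose_succ_right_eq _ _
    have e1 : (n-t-2)+1 = n - t - 1 := by omega
    have e2 : Nat.succ (n-t-2) = n - t - 1 := by omega
    rw [e1, e2] at id1
    have key : (n-t-1) * Nat.choose (n-t-2) (a-1)
        = Nat.choose (n-t-1) (a-1) * ((n-t-1) - (a-1)) := by rw [id1, id2]
    have e3 : n - (t+1) - 1 = n - t - 2 := by omega
    rw [e3, key]
    have hfac : s - t + 1 ≤ (n-t-1) - (a-1) := by omega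
    calc (s - t + 1) * Nat.choose (n-t-1) (a-1)
        ≤ ((n-t-1) - (a-1)) * Nat.choose (n-t-1) (a-1) :=
          Nat.mul_le_mul_right _ hfac
      _ = Nat.choose (n-t-1) (a-1) * ((n-t-1) - (a-1)) := Nat.mul_comm _ _
  -- (n - t - 1) * Nfn (t+1) ≤ (s - t) * Nfn t
  have h2 : (n - t - 1) * Nfn m n R γ (t+1) ≤ (s - t) * Nfn m n R γ t := by
    unfold Nfn
    rw [Finset.mul_sum, Finset.mul_sum]
    refine Finset.sum_le_sum fun α hα => ?_
    rw [Finset.mul_sum, Finset.mul_sum]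
    refine Finset.sum_le_sum fun b hb => ?_
    obtain ⟨hb1, hb2⟩ := hmemb α hα b hb
    have id1 : Nat.succ (n-t-2) * Nat.choose (n-t-2) (b-t-1)
        = Nat.choose ((n-t-2)+1) ((b-t-1)+1) * ((b-t-1)+1) := Nat.add_one_mul_choose_eq _ _
    have e1 : (n-t-2)+1 = n - t - 1 := by omega
    have e2 : Nat.succ (n-t-2) = n - t - 1 := by omega
    have e5 : (b-t-1)+1 = b - t := by omega
    rw [e1, e2, e5] at id1
    have e3 : n - (t+1) - 1 = n - t - 2 := by omega
    have e4 : b - (t+1) = b - t - 1 := by omega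
    rw [e3, e4, id1]
    have hfac : b - t ≤ s - t := by omega
    calc Nat.choose (n-t-1) (b-t) * (b-t)
        ≤ Nat.choose (n-t-1) (b-t) * (s-t) := Nat.mul_le_mul_left _ hfac
      _ = (s-t) * Nat.choose (n-t-1) (b-t) := Nat.mul_comm _ _
  have chain : (n - t - 1) * Nfn m n R γ (t+1) ≤ (n - t - 1) * Pf n (R γ) (t+1) := by
    calc (n - t - 1) * Nfn m n R γ (t+1)
        ≤ (s - t) * Nfn m n R γ t := h2
      _ ≤ (s - t) * Pf n (R γ) t := Nat.mul_le_mul_left _ hNP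
      _ ≤ (s - t + 1) * Pf n (R γ) t := Nat.mul_le_mul_right _ (by omega)
      _ ≤ (n - t - 1) * Pf n (R γ) (t+1) := h1
  exact Nat.le_of_mul_le_mul_left chain hApos

theorem stmt12 (m n : ℕ) (hm : 2 ≤ m) (hn : 1 ≤ n)
    (R : Fin m → Finset ℕ) (hRne : ∀ i, (R i).Nonempty)
    (hRsub : ∀ i, R i ⊆ Finset.Icc 1 n)
    (i0 : Fin m) (hi0 : ∀ i, (R i).sup id ≤ (R i0).sup id)
    (k2 : ℕ) (hk2 : IsGreatest {x | ∃ i, i ≠ i0 ∧ x = (R i).sup id} k2)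
    (γ : Fin m) (k : ℕ)
    (hk : IsLeast {x | ∃ j, j ≠ γ ∧ x ∈ R j} k)
    (hn2 : (R i0).sup id + k2 < n)
    (l : ℕ) (hl1 : 1 ≤ l) (hlk : l ≤ k) :
    Fval m n R γ l ≤ max (Fval m n R γ 1) (Fval m n R γ k) := by
  classical
  obtain ⟨j0, hj0γ, hkj0⟩ := hk.1
  have hk1 : 1 ≤ k := (Finset.mem_Icc.mp (hRsub j0 hkj0)).1
  have hsγ1 : 1 ≤ (R γ).sup id := by
    obtain ⟨a, ha⟩ := hRne γ
    exact le_trans (Finset.mem_Icc.mp (hRsub γ ha)).1 (Finset.le_sup (f := id) ha)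
  obtain ⟨s, hks, hsn, hsb⟩ :
      ∃ s, k ≤ s ∧ (R γ).sup id + s < n ∧ ∀ α, α ≠ γ → (R α).sup id ≤ s := by
    by_cases hγ : γ = i0
    · refine ⟨k2, ?_, ?_, ?_⟩
      · exact le_trans (Finset.le_sup (f := id) hkj0)
          (hk2.2 ⟨j0, by rw [hγ] at hj0γ; exact hj0γ, rfl⟩)
      · have : (R γ).sup id ≤ (R i0).sup id := hi0 γ
        omega
      · intro α hα
        exact hk2.2 ⟨α, by rw [hγ] at hα; exact hα, rfl⟩
    · refine ⟨(R i0).sup id, ?_, ?_, ?_⟩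
      · exact le_trans (Finset.le_sup (f := id) hkj0) (hi0 j0)
      · have : (R γ).sup id ≤ k2 := hk2.2 ⟨γ, hγ, rfl⟩
        omega
      · intro α _
        exact hi0 α
  have hmema : ∀ a ∈ R γ, 1 ≤ a ∧ a ≤ (R γ).sup id := fun a ha =>
    ⟨(Finset.mem_Icc.mp (hRsub γ ha)).1, Finset.le_sup (f := id) ha⟩
  have hmemb : ∀ α ∈ Finset.univ.erase γ, ∀ b ∈ R α, k ≤ b ∧ b ≤ s := by
    intro α hα b hb
    have hαγ : α ≠ γ := (Finset.mem_erase.mp hα).1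
    exact ⟨hk.2 ⟨α, hαγ, hb⟩, le_trans (Finset.le_sup (f := id) hb) (hsb α hαγ)⟩
  have hstep : ∀ t, t + 1 ≤ k →
      Fval m n R γ (t+1) + Nfn m n R γ t = Fval m n R γ t + Pf n (R γ) t :=
    fun t ht => step_eq m n R γ k s ((R γ).sup id) hmema hmemb hsn hsγ1 hks t ht
  have hsign : ∀ t, t + 2 ≤ k → Nfn m n R γ t ≤ Pf n (R γ) t →
      Nfn m n R γ (t+1) ≤ Pf n (R γ) (t+1) :=
    fun t ht h => sign_step m n R γ k s ((R γ).sup id) hmema hmemb hsn hsγ1 hks t ht h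
  have claim1 : ∀ j t, 1 ≤ t → t + j ≤ k → Nfn m n R γ t ≤ Pf n (R γ) t →
      Fval m n R γ t ≤ Fval m n R γ (t + j) := by
    intro j
    induction j with
    | zero => intro t _ _ _; simp
    | succ j ih =>
      intro t ht htj hNP
      have hst := hstep t (by omega)
      have h1 : Fval m n R γ t ≤ Fval m n R γ (t+1) := by omega
      rcases Nat.eq_zero_or_pos j with hj | hj
      · subst hj; simpa using h1
      · have h2 := hsign t (by omega) hNP
        have h3 := ih (t+1) (by omega) (by omega) h2
        have e : t + (j+1) = (t+1) + j := by omega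
        rw [e]
        exact le_trans h1 h3
  have claim2 : ∀ t, 1 ≤ t → t ≤ k →
      Fval m n R γ t ≤ Fval m n R γ 1 ∨ Fval m n R γ t ≤ Fval m n R γ k := by
    intro t
    induction t with
    | zero => omega
    | succ t ih =>
      intro _ htk
      rcases Nat.eq_zero_or_pos t with ht0 | ht0
      · subst ht0; left; exact le_refl _
      rcases eq_or_lt_of_le htk with he | hlt
      · right; rw [he]
      · by_cases hNP : Nfn m n R γ t ≤ Pf n (R γ) t
        · have h2 := hsign t (by omega) hNP
          have h3 := claim1 (k - (t+1)) (t+1) (by omega) (by omega) h2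
          have e : (t+1) + (k - (t+1)) = k := by omega
          rw [e] at h3
          right; exact h3
        · push_neg at hNP
          have hst := hstep t (by omega)
          have h1 : Fval m n R γ (t+1) ≤ Fval m n R γ t := by omega
          rcases ih (by omega) (by omega) with h | h
          · left; omega
          · right; omega
  rcases claim2 l hl1 hlk with h | h
  · exact le_trans h (le_max_left _ _)
  · exact le_trans h (le_max_right _ _)
end

section
/- Let n, l, u, a, b be natural numbers with 1 ≤ u ≤ l, u ≤ a, l + 1 − u ≤ b, and n > a + b. Then C(n−l, b−l+u−1) · C(n−l, a−u) < C(n−l, b−l+u) · C(n−l, a−u+1). -/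
lemma aux13 (m i j : ℕ) (h : i + j + 2 ≤ m) :
    Nat.choose m i * Nat.choose m j < Nat.choose m (i+1) * Nat.choose m (j+1) := by
  have c1 : 0 < Nat.choose m i := Nat.choose_pos (by omega)
  have c2 : 0 < Nat.choose m j := Nat.choose_pos (by omega)
  have e1 := Nat.choose_succ_right_eq m i
  have e2 := Nat.choose_succ_right_eq m j
  have hkey : Nat.choose m i * Nat.choose m j * ((i+1)*(j+1)) <
      Nat.choose m (i+1) * Nat.choose m (j+1) * ((i+1)*(j+1)) := by
    have h2 : Nat.choose m (i+1) * Nat.choose m (j+1) * ((i+1)*(j+1)) =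
        (Nat.choose m i * (m - i)) * (Nat.choose m j * (m - j)) := by
      rw [← e1, ← e2]; ring
    rw [h2]
    have hlt : (i+1)*(j+1) < (m-i)*(m-j) := by
      have h1 : j + 2 ≤ m - i := by omega
      have h2 : i + 2 ≤ m - j := by omega
      calc (i+1)*(j+1) < (i+2)*(j+2) := by nlinarith
        _ ≤ (m-j)*(m-i) := Nat.mul_le_mul h2 h1
        _ = (m-i)*(m-j) := by ring
    calc Nat.choose m i * Nat.choose m j * ((i+1)*(j+1))
        < Nat.choose m i * Nat.choose m j * ((m-i)*(m-j)) :=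
          Nat.mul_lt_mul_of_le_of_lt (le_refl _) hlt (Nat.mul_pos c1 c2)
      _ = (Nat.choose m i * (m - i)) * (Nat.choose m j * (m - j)) := by ring
  exact Nat.lt_of_mul_lt_mul_right hkey

theorem stmt13 (n l u a b : ℕ) (hu : 1 ≤ u) (hul : u ≤ l) (hua : u ≤ a)
    (hb : l + 1 - u ≤ b) (hn : a + b < n) :
    Nat.choose (n - l) (b - (l + 1 - u)) * Nat.choose (n - l) (a - u) <
      Nat.choose (n - l) (b - (l + 1 - u) + 1) * Nat.choose (n - l) (a - u + 1) := by
  exact aux13 (n - l) _ _ (by omega)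
end

section
/- Let n, l, a, b be natural numbers with a ≥ 1, 1 ≤ l ≤ b, and n > a + b. Then C(n−l−1, b−l) · C(n−l, a−1) < C(n−l−1, a−1) · C(n−l, b−l+1). -/
theorem stmt14 (n l a b : ℕ) (ha : 1 ≤ a) (hl : 1 ≤ l) (hlb : l ≤ b) (hn : a + b < n) :
    Nat.choose (n - l - 1) (b - l) * Nat.choose (n - l) (a - 1) <
      Nat.choose (n - l - 1) (a - 1) * Nat.choose (n - l) (b - l + 1) := by
  set m := n - l with hmdef
  set j := a - 1 with hjdef
  set k := b - l with hkdef
  have hjk : j + k + 2 ≤ m := by omega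
  have hm1 : m - 1 + 1 = m := by omega
  have h1 : Nat.choose (m - 1) j * m = Nat.choose m j * (m - j) := by
    have := Nat.choose_mul_succ_eq (m - 1) j
    rwa [hm1] at this
  have h2 : m * Nat.choose (m - 1) k = Nat.choose m (k + 1) * (k + 1) := by
    have := Nat.add_one_mul_choose_eq (m - 1) k
    rwa [hm1] at this
  have hA : 0 < Nat.choose (m - 1) k := Nat.choose_pos (by omega)
  have hA' : 0 < Nat.choose (m - 1) j := Nat.choose_pos (by omega)
  have hd : k + 1 < m - j := by omega
  set A := Nat.choose (m - 1) k
  set A' := Nat.choose (m - 1) j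
  set B := Nat.choose m j
  set B' := Nat.choose m (k + 1)
  have key : (A * B) * ((m - j) * (k + 1)) < (A' * B') * ((m - j) * (k + 1)) := by
    have e1 : (A * B) * ((m - j) * (k + 1)) = (A * A' * m) * (k + 1) := by
      calc (A * B) * ((m - j) * (k + 1)) = (A * (k + 1)) * (B * (m - j)) := by ring
        _ = (A * (k + 1)) * (A' * m) := by rw [← h1]
        _ = (A * A' * m) * (k + 1) := by ring
    have e2 : (A' * B') * ((m - j) * (k + 1)) = (A * A' * m) * (m - j) := by
      calc (A' * B') * ((m - j) * (k + 1)) = (A' * (m - j)) * (B' * (k + 1)) := by ring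
        _ = (A' * (m - j)) * (m * A) := by rw [← h2]
        _ = (A * A' * m) * (m - j) := by ring
    rw [e1, e2]
    exact mul_lt_mul_of_pos_left hd (Nat.mul_pos (Nat.mul_pos hA hA') (by omega))
  exact Nat.lt_of_mul_lt_mul_right key
end
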